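/- arXiv:1309.4237 — 9 statements merged into one kernel-verified Lean document; each statement's English description precedes it below -/
import Mathlib

section
/- For all n ≥ k ≥ 0, the Jacobi-Stirling number of the second kind satisfies JS(n,k;z) = h_{n-k}(1(1+z), 2(2+z), ..., k(k+z)), where h_j denotes the complete homogeneous symmetric polynomial of degree j. -/
open Polynomial Finset

/-- The Jacobi-Stirling numbers of the second kind `JS(n,k;z)`, as polynomials in `z`. -/
noncomputable def JS : ℕ → ℕ → Polynomial ℤ
  | 0, 0 => 1
  | 0, _+1 => 0
  | _+1, 0 => 0
  | n+1, k+1 => JS n k + (C ((k : ℤ) + 1) * (C ((k : ℤ) + 1) + X)) * JS n (k+1)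

noncomputable def Hs (k j : ℕ) : Polynomial ℤ :=
  ∑ m ∈ (Finset.Icc 1 k).sym j,
    (Multiset.map (fun i : ℕ => C (i : ℤ) * (C (i : ℤ) + X)) (m : Multiset ℕ)).prod

lemma summand_eq (j : ℕ) (m : Sym ℕ j) :
    (Multiset.map (fun i => C (i : ℤ) * (C (i : ℤ) + X)) (m : Multiset ℕ)).prod
    = (Multiset.map (fun i : ℕ => C (i : ℤ) * (C (i : ℤ) + X)) (m : Multiset ℕ)).prod := by
  set t := (m : Multiset ℕ)
  show (Multiset.map _ (t.bind fun a => {(a:ℤ)})).prod = _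
  rw [Multiset.bind_singleton, Multiset.map_map]
  rfl

lemma Hs_zero (k : ℕ) : Hs k 0 = 1 := by
  simp [Hs, show ((∅ : Sym ℕ 0) : Multiset ℕ) = 0 from rfl]

lemma Hs_zero_left (j : ℕ) : Hs 0 (j+1) = 0 := by
  simp [Hs, show Finset.Icc 1 0 = (∅ : Finset ℕ) by rfl]

lemma JS_eq_zero (n : ℕ) : ∀ k, n < k → JS n k = 0 := by
  induction n with
  | zero => rintro (_|k) h; · omega
            · rfl
  | succ n ih =>
      rintro (_|k) h; · omega
      rw [JS, ih k (by omega), ih (k+1) (by omega)]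
      ring

lemma Hs_rec (k j : ℕ) :
    Hs (k+1) (j+1) = Hs k (j+1) + (C ((k:ℤ)+1) * (C ((k:ℤ)+1) + X)) * Hs (k+1) j := by
  classical
  have hf : True := trivial
  let f : ℕ → Polynomial ℤ := fun i => C (i : ℤ) * (C (i : ℤ) + X)
  have hsum := Finset.sum_filter_add_sum_filter_not
    ((Finset.Icc 1 (k+1)).sym (j+1)) (fun m => (k+1) ∈ m)
    (fun m => (Multiset.map f (m : Multiset ℕ)).prod)
  have h1 : ((Finset.Icc 1 (k+1)).sym (j+1)).filter (fun m => ¬ (k+1) ∈ m)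
      = (Finset.Icc 1 k).sym (j+1) := by
    ext m
    simp only [Finset.mem_filter, Finset.mem_sym_iff, Finset.mem_Icc]
    constructor
    · rintro ⟨h1, h2⟩ a ha
      have := h1 a ha
      have : a ≠ k+1 := fun e => h2 (e ▸ ha)
      omega
    · intro hm
      refine ⟨fun a ha => by have := hm a ha; omega, fun hc => ?_⟩
      have := hm _ hc; omega
  have h2 : ((Finset.Icc 1 (k+1)).sym (j+1)).filter (fun m => (k+1) ∈ m)
      = ((Finset.Icc 1 (k+1)).sym j).image (Sym.cons (k+1)) := by
    ext m
    simp only [Finset.mem_filter, Finset.mem_image]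
    constructor
    · rintro ⟨h1, h2⟩
      refine ⟨m.erase (k+1) h2, ?_, Sym.cons_erase h2⟩
      rw [Finset.mem_sym_iff] at h1 ⊢
      intro a ha
      exact h1 a (by
        have : a ∈ (m : Multiset ℕ) := by
          have := Sym.coe_erase h2
          exact Multiset.mem_of_mem_erase (by rwa [← this])
        exact this)
    · rintro ⟨m', hm', rfl⟩
      constructor
      · rw [Finset.mem_sym_iff] at hm' ⊢
        intro a ha
        rcases Sym.mem_cons.1 ha with rfl | ha
        · simp [Finset.mem_Icc]
        · exact hm' a ha
      · exact Sym.mem_cons_self _ _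
  simp only [Hs]
  rw [← hsum, h1, h2]
  rw [Finset.sum_image (fun x _ y _ hxy => (Sym.cons_inj_right _ _ _).1 hxy)]
  have : ∀ m' : Sym ℕ j,
      (Multiset.map f ((Sym.cons (k+1) m' : Sym ℕ (j+1)) : Multiset ℕ)).prod
        = f (k+1) * (Multiset.map f (m' : Multiset ℕ)).prod := by
    intro m'
    rw [Sym.coe_cons, Multiset.map_cons, Multiset.prod_cons]
  simp only [this]
  rw [← Finset.mul_sum]
  have hfk : f (k+1) = C ((k:ℤ)+1) * (C ((k:ℤ)+1) + X) := by
    show C ((k:ℕ)+1 : ℤ) * (C ((k:ℕ)+1 : ℤ) + X) = _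
    ring
  rw [hfk]
  ring

lemma JS_eq_Hs (n : ℕ) : ∀ k, k ≤ n → JS n k = Hs k (n - k) := by
  induction n with
  | zero =>
      rintro (_|k) h
      · rw [show JS 0 0 = 1 from rfl, Hs_zero]
      · omega
  | succ n ih =>
      rintro (_|k) h
      · rw [show JS (n+1) 0 = 0 from rfl, Nat.sub_zero, Hs_zero_left]
      · rw [JS]
        rcases Nat.lt_or_ge k n with hk | hk
        · rw [ih k (by omega), ih (k+1) (by omega)]
          have hj : n - k = (n - (k+1)) + 1 := by omega
          have hj2 : n + 1 - (k+1) = (n - (k+1)) + 1 := by omega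
          rw [hj, hj2, Hs_rec]
        · have hkn : k = n := by omega
          subst hkn
          rw [JS_eq_zero k (k+1) (by omega), ih k le_rfl]
          simp [Hs_zero]

/-- `JS(n,k;z)` equals the complete homogeneous symmetric polynomial of degree `n-k`
in the variables `1(1+z), 2(2+z), …, k(k+z)`. -/
theorem JS_eq_hsymm (n k : ℕ) (h : k ≤ n) :
    JS n k =
      ∑ m ∈ (Finset.Icc 1 k).sym (n - k),
        (Multiset.map (fun i => C (i : ℤ) * (C (i : ℤ) + X)) (m : Multiset ℕ)).prod := by
  rw [JS_eq_Hs n k h]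
  simp only [Hs]
  exact Finset.sum_congr rfl (fun m _ => (summand_eq _ m).symm)
end

section
/- For every fixed n ≥ 0, the sequence of polynomials {JS(n,k;z-1)}_{k=0}^{n} is strongly z-log-concave: for all 1 ≤ k ≤ l ≤ n, the polynomial JS(n,k;z-1)·JS(n,l;z-1) − JS(n,k-1;z-1)·JS(n,l+1;z-1) has nonnegative coefficients as a polynomial in z. -/
open Polynomial Finset

/-- `JS(n,k;z-1)`: the Jacobi-Stirling number of the second kind with `z` replaced by `z-1`. -/
noncomputable def JSm (n k : ℕ) : Polynomial ℤ := (JS n k).comp (X - 1)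

/-- Polynomials with nonnegative coefficients. -/
def PNN (p : Polynomial ℤ) : Prop := ∀ i, 0 ≤ p.coeff i

lemma PNN_zero : PNN 0 := fun i => by simp

lemma PNN_one : PNN 1 := fun i => by
  rw [Polynomial.coeff_one]
  split <;> norm_num

lemma PNN_add {p q : Polynomial ℤ} (hp : PNN p) (hq : PNN q) : PNN (p + q) := fun i => by
  rw [Polynomial.coeff_add]; exact add_nonneg (hp i) (hq i)

lemma PNN_mul {p q : Polynomial ℤ} (hp : PNN p) (hq : PNN q) : PNN (p * q) := fun i => by
  rw [Polynomial.coeff_mul]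
  exact Finset.sum_nonneg fun x _ => mul_nonneg (hp _) (hq _)

lemma PNN_C {a : ℤ} (h : 0 ≤ a) : PNN (C a) := fun i => by
  rw [Polynomial.coeff_C]
  split <;> simp [h]

lemma PNN_X : PNN (X : Polynomial ℤ) := fun i => by
  rw [Polynomial.coeff_X]
  split <;> norm_num

/-- The weight `c_j = j(j-1) + j z` appearing in the shifted recurrence. -/
noncomputable def cw (j : ℕ) : Polynomial ℤ := C (j : ℤ) * (C (j : ℤ) - 1 + X)

lemma cw_succ (j : ℕ) : cw (j+1) = (C (j:ℤ) + 1) * (C (j:ℤ) + X) := by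
  simp only [cw, Nat.cast_add, Nat.cast_one, map_add, map_one]
  ring

lemma PNN_cw (j : ℕ) : PNN (cw j) := by
  cases j with
  | zero =>
    have h : cw 0 = 0 := by simp [cw]
    rw [h]; exact PNN_zero
  | succ j =>
    rw [cw_succ]
    exact PNN_mul (PNN_add (PNN_C (by positivity)) PNN_one)
      (PNN_add (PNN_C (by positivity)) PNN_X)

lemma cw_step (j : ℕ) : cw (j+1) = cw j + (2 * C (j:ℤ) + X) := by
  rw [cw_succ]; unfold cw; ring

lemma PNN_cw_step (j : ℕ) : PNN (2 * C (j:ℤ) + X) := by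
  have h2 : (2 : Polynomial ℤ) * C (j:ℤ) = C (j:ℤ) + C (j:ℤ) := by ring
  rw [h2]
  exact PNN_add (PNN_add (PNN_C (by positivity)) (PNN_C (by positivity))) PNN_X

lemma cw_twobytwo (j l : ℕ) (h : j + 1 ≤ l) :
    PNN (cw (j+1+1) * cw l - cw (j+1) * cw (l+1)) := by
  have e : cw (j+1+1) * cw l - cw (j+1) * cw (l+1)
      = C ((l:ℤ) - (j:ℤ) - 1) * (C (2*((j:ℤ)+1)*(l:ℤ)) + C ((j:ℤ)+(l:ℤ)) * X + X^2) := by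
    simp only [cw, Nat.cast_add, Nat.cast_one, map_add, map_one, map_sub, map_mul, map_ofNat]
    ring
  rw [e]
  have hjl : (j:ℤ) + 1 ≤ (l:ℤ) := by exact_mod_cast h
  refine PNN_mul (PNN_C (by linarith)) (PNN_add (PNN_add (PNN_C (by positivity))
    (PNN_mul (PNN_C (by positivity)) PNN_X)) ?_)
  rw [sq]; exact PNN_mul PNN_X PNN_X

lemma JSm_zero_zero : JSm 0 0 = 1 := by
  simp [JSm, JS]

lemma JSm_zero_succ (k : ℕ) : JSm 0 (k+1) = 0 := by
  simp [JSm, JS]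

lemma JSm_succ_zero (n : ℕ) : JSm (n+1) 0 = 0 := by
  simp [JSm, JS]

lemma JSm_rec (n k : ℕ) : JSm (n+1) (k+1) = JSm n k + cw (k+1) * JSm n (k+1) := by
  have hJS : JS (n+1) (k+1) = JS n k + (C ((k : ℤ) + 1) * (C ((k : ℤ) + 1) + X)) * JS n (k+1) := by
    rw [JS]
  have hc : (C ((k : ℤ) + 1) * (C ((k : ℤ) + 1) + X)).comp (X - 1) = cw (k+1) := by
    simp only [Polynomial.mul_comp, Polynomial.add_comp, Polynomial.C_comp, Polynomial.X_comp, Polynomial.one_comp,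
      cw, Nat.cast_add, Nat.cast_one, map_add, map_one]
    ring
  simp only [JSm, hJS, Polynomial.add_comp, Polynomial.mul_comp]
  rw [← hc]
  simp [Polynomial.mul_comp]

lemma PNN_JSm : ∀ n k, PNN (JSm n k)
  | 0, 0 => by rw [JSm_zero_zero]; exact PNN_one
  | 0, k+1 => by rw [JSm_zero_succ]; exact PNN_zero
  | n+1, 0 => by rw [JSm_succ_zero]; exact PNN_zero
  | n+1, k+1 => by
    rw [JSm_rec]
    exact PNN_add (PNN_JSm n k) (PNN_mul (PNN_cw (k+1)) (PNN_JSm n (k+1)))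

lemma JSm_eq_zero_of_lt : ∀ n k, n < k → JSm n k = 0
  | 0, 0, h => absurd h (by omega)
  | n+1, 0, h => absurd h (by omega)
  | 0, k+1, _ => JSm_zero_succ k
  | n+1, k+1, h => by
    rw [JSm_rec, JSm_eq_zero_of_lt n k (by omega), JSm_eq_zero_of_lt n (k+1) (by omega)]
    ring

/-- The key mutual induction: two-row minors `M` and their `c`-weighted versions `N`
are coefficientwise nonnegative on suitable regions. -/
lemma key : ∀ (t n m k₀ l : ℕ), n + m = t →
    ((k₀ ≤ l → k₀ + m ≤ l + n →
      PNN (JSm n (k₀+1) * JSm m l - JSm n k₀ * JSm m (l+1))) ∧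
     (k₀ ≤ l → k₀ + m < l + n →
      PNN (cw l * (JSm n (k₀+1) * JSm m l) - cw (l+1) * (JSm n k₀ * JSm m (l+1))))) := by
  intro t
  induction t using Nat.strong_induction_on with
  | _ t ih =>
  intro n m k₀ l ht
  constructor
  · -- the minor M
    intro hkl hs
    match n, k₀ with
    | 0, 0 =>
      have e : JSm 0 (0+1) * JSm m l - JSm 0 0 * JSm m (l+1) = 0 := by
        rw [JSm_zero_succ, JSm_eq_zero_of_lt m (l+1) (by omega)]; ring
      rw [e]; exact PNN_zero
    | 0, j+1 =>
      have e : JSm 0 (j+1+1) * JSm m l - JSm 0 (j+1) * JSm m (l+1) = 0 := by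
        rw [JSm_zero_succ, JSm_zero_succ]; ring
      rw [e]; exact PNN_zero
    | n'+1, 0 =>
      have e : JSm (n'+1) (0+1) * JSm m l - JSm (n'+1) 0 * JSm m (l+1)
          = JSm (n'+1) (0+1) * JSm m l := by
        rw [JSm_succ_zero]; ring
      rw [e]; exact PNN_mul (PNN_JSm _ _) (PNN_JSm _ _)
    | n'+1, j+1 =>
      rcases eq_or_lt_of_le hs with heq | hlt
      · -- slack zero : expand the second row
        rcases eq_or_lt_of_le hkl with hkeq | hklt
        · -- k₀ = l : the minor vanishes
          obtain rfl : l = j + 1 := hkeq.symm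
          obtain rfl : m = n' + 1 := by omega
          have e : JSm (n'+1) (j+1+1) * JSm (n'+1) (j+1)
              - JSm (n'+1) (j+1) * JSm (n'+1) (j+1+1) = 0 := by ring
          rw [e]; exact PNN_zero
        · -- k₀ < l
          obtain ⟨l₀, rfl⟩ : ∃ l₀, l = l₀ + 1 := ⟨l - 1, by omega⟩
          obtain ⟨m', rfl⟩ : ∃ m', m = m' + 1 := ⟨m - 1, by omega⟩
          have h1 := (ih ((n'+1) + m') (by omega) (n'+1) m' (j+1) l₀ rfl).1
            (by omega) (by omega)
          have h2 := (ih ((n'+1) + m') (by omega) (n'+1) m' (j+1) (l₀+1) rfl).2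
            (by omega) (by omega)
          have e : JSm (n'+1) (j+1+1) * JSm (m'+1) (l₀+1)
              - JSm (n'+1) (j+1) * JSm (m'+1) (l₀+1+1)
              = (JSm (n'+1) (j+1+1) * JSm m' l₀ - JSm (n'+1) (j+1) * JSm m' (l₀+1))
              + (cw (l₀+1) * (JSm (n'+1) (j+1+1) * JSm m' (l₀+1))
                - cw (l₀+1+1) * (JSm (n'+1) (j+1) * JSm m' (l₀+1+1))) := by
            rw [JSm_rec m' l₀, JSm_rec m' (l₀+1)]; ring
          rw [e]; exact PNN_add h1 h2
      · -- slack positive : expand the first row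
        have h1 := (ih (n' + m) (by omega) n' m j l rfl).1 (by omega) (by omega)
        have h2 := (ih (n' + m) (by omega) n' m (j+1) l rfl).1 (by omega) (by omega)
        have e : JSm (n'+1) (j+1+1) * JSm m l - JSm (n'+1) (j+1) * JSm m (l+1)
            = (JSm n' (j+1) * JSm m l - JSm n' j * JSm m (l+1))
            + (cw (j+1) * (JSm n' (j+1+1) * JSm m l - JSm n' (j+1) * JSm m (l+1))
              + (2 * C (((j+1 : ℕ)):ℤ) + X) * (JSm n' (j+1+1) * JSm m l)) := by
          rw [JSm_rec n' (j+1), JSm_rec n' j, cw_step (j+1)]; ring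
        rw [e]
        exact PNN_add h1 (PNN_add (PNN_mul (PNN_cw _) h2)
          (PNN_mul (PNN_cw_step _) (PNN_mul (PNN_JSm _ _) (PNN_JSm _ _))))
  · -- the weighted minor N
    intro hkl hs
    match n, k₀ with
    | 0, 0 =>
      have e : cw l * (JSm 0 (0+1) * JSm m l) - cw (l+1) * (JSm 0 0 * JSm m (l+1)) = 0 := by
        rw [JSm_zero_succ, JSm_eq_zero_of_lt m (l+1) (by omega)]; ring
      rw [e]; exact PNN_zero
    | 0, j+1 =>
      have e : cw l * (JSm 0 (j+1+1) * JSm m l) - cw (l+1) * (JSm 0 (j+1) * JSm m (l+1)) = 0 := by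
        rw [JSm_zero_succ, JSm_zero_succ]; ring
      rw [e]; exact PNN_zero
    | n'+1, 0 =>
      have e : cw l * (JSm (n'+1) (0+1) * JSm m l) - cw (l+1) * (JSm (n'+1) 0 * JSm m (l+1))
          = cw l * (JSm (n'+1) (0+1) * JSm m l) := by
        rw [JSm_succ_zero]; ring
      rw [e]; exact PNN_mul (PNN_cw _) (PNN_mul (PNN_JSm _ _) (PNN_JSm _ _))
    | n'+1, j+1 =>
      have h1 := (ih (n' + m) (by omega) n' m j l rfl).2 (by omega) (by omega)
      have h2 := (ih (n' + m) (by omega) n' m (j+1) l rfl).1 (by omega) (by omega)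
      have h3 := cw_twobytwo j l (by omega)
      have e : cw l * (JSm (n'+1) (j+1+1) * JSm m l)
          - cw (l+1) * (JSm (n'+1) (j+1) * JSm m (l+1))
          = (cw l * (JSm n' (j+1) * JSm m l) - cw (l+1) * (JSm n' j * JSm m (l+1)))
          + ((cw (j+1+1) * cw l)
              * (JSm n' (j+1+1) * JSm m l - JSm n' (j+1) * JSm m (l+1))
            + (cw (j+1+1) * cw l - cw (j+1) * cw (l+1))
              * (JSm n' (j+1) * JSm m (l+1))) := by
        rw [JSm_rec n' (j+1), JSm_rec n' j]; ring
      rw [e]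
      exact PNN_add h1 (PNN_add (PNN_mul (PNN_mul (PNN_cw _) (PNN_cw _)) h2)
        (PNN_mul h3 (PNN_mul (PNN_JSm _ _) (PNN_JSm _ _))))

/-- For fixed `n`, the sequence `{JS(n,k;z-1)}_{k=0}^{n}` is strongly `z`-log-concave:
for `1 ≤ k ≤ l ≤ n`, the polynomial `JS(n,k;z-1)·JS(n,l;z-1) − JS(n,k-1;z-1)·JS(n,l+1;z-1)`
has nonnegative coefficients. -/
theorem JSm_row_strongly_log_concave (n k l : ℕ) (hk : 1 ≤ k) (hkl : k ≤ l) (hl : l ≤ n)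
    (i : ℕ) :
    0 ≤ (JSm n k * JSm n l - JSm n (k - 1) * JSm n (l + 1)).coeff i := by
  obtain ⟨k₀, rfl⟩ : ∃ k₀, k = k₀ + 1 := ⟨k - 1, by omega⟩
  have h := (key (n + n) n n k₀ l rfl).1 (by omega) (by omega)
  simpa using h i
end

section
/- For every fixed k ≥ 0, the sequence {JS(n,k;z-1)}_{n≥k} is strongly z-log-concave: for all k ≤ m ≤ n with m ≥ k+1, the polynomial JS(n,k';z-1) entries satisfy that JS(m,k;z-1)·JS(n,k;z-1) − JS(m-1,k;z-1)·JS(n+1,k;z-1) has nonnegative coefficients as a polynomial in z. -/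
open Polynomial Finset

lemma JSm_succ_succ (n k : ℕ) :
    JSm (n+1) (k+1) = JSm n k + (C ((k:ℤ)+1) * (C (k:ℤ) + X)) * JSm n (k+1) := by
  show (JS n k + (C ((k : ℤ) + 1) * (C ((k : ℤ) + 1) + X)) * JS n (k+1)).comp (X - 1) = _
  simp only [add_comp, mul_comp, C_comp, X_comp, one_comp, JSm, C_add, C_1]
  ring

lemma coeff_mul_nonneg {p q : Polynomial ℤ} (hp : ∀ i, 0 ≤ p.coeff i)
    (hq : ∀ i, 0 ≤ q.coeff i) (i : ℕ) : 0 ≤ (p * q).coeff i := by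
  rw [coeff_mul]
  exact Finset.sum_nonneg fun x _ => mul_nonneg (hp _) (hq _)

lemma c_coeff_nonneg (k : ℕ) (i : ℕ) : 0 ≤ ((C ((k:ℤ)+1) * (C (k:ℤ) + X))).coeff i := by
  apply coeff_mul_nonneg (fun j => ?_) (fun j => ?_)
  · simp only [coeff_C]
    split_ifs <;> positivity
  · simp only [coeff_add, coeff_C, coeff_X]
    split_ifs <;> omega

lemma JSm_coeff_nonneg : ∀ n k i, 0 ≤ (JSm n k).coeff i := by
  intro n
  induction n with
  | zero =>
    intro k i
    cases k with
    | zero => rw [JSm_zero_zero]; simp [coeff_one]; split_ifs <;> norm_num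
    | succ k => simp [JSm_zero_succ]
  | succ n ih =>
    intro k i
    cases k with
    | zero => simp [JSm_succ_zero]
    | succ k =>
      rw [JSm_succ_succ, coeff_add]
      exact add_nonneg (ih k i) (coeff_mul_nonneg (c_coeff_nonneg k) (fun j => ih (k+1) j) i)

/-- Cross-column positivity: for `k1 ≤ k2` and `a ≤ b`,
`JSm a k1 * JSm b k2 - JSm a k2 * JSm b k1` has nonnegative coefficients. -/
lemma F_nonneg (a : ℕ) : ∀ b k1 k2, k1 ≤ k2 → a ≤ b → ∀ i,
    0 ≤ (JSm a k1 * JSm b k2 - JSm a k2 * JSm b k1).coeff i := by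
  induction a with
  | zero =>
    intro b k1 k2 hk _ i
    cases k1 with
    | zero =>
      cases k2 with
      | zero => simp
      | succ k2 =>
        rw [JSm_zero_zero, JSm_zero_succ]
        simp only [one_mul, zero_mul, sub_zero]
        exact JSm_coeff_nonneg b _ i
    | succ k1 =>
      obtain ⟨k2', rfl⟩ : ∃ k2', k2 = k2'+1 := ⟨k2-1, by omega⟩
      rw [JSm_zero_succ, JSm_zero_succ]
      simp
  | succ a ih =>
    intro b k1 k2 hk hab i
    obtain ⟨b', rfl⟩ : ∃ b', b = b'+1 := ⟨b-1, by omega⟩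
    rcases eq_or_lt_of_le hk with rfl | hlt
    · simp
    cases k1 with
    | zero =>
      rw [JSm_succ_zero, JSm_succ_zero]
      simp
    | succ j1 =>
      obtain ⟨j2, rfl⟩ : ∃ j2, k2 = j2+1 := ⟨k2-1, by omega⟩
      have hab' : a ≤ b' := by omega
      have key : JSm (a+1) (j1+1) * JSm (b'+1) (j2+1) - JSm (a+1) (j2+1) * JSm (b'+1) (j1+1)
          = (JSm a j1 * JSm b' j2 - JSm a j2 * JSm b' j1)
          + (C ((j2:ℤ)+1) * (C (j2:ℤ) + X)) *
              (JSm a j1 * JSm b' (j2+1) - JSm a (j2+1) * JSm b' j1)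
          + (C ((j1:ℤ)+1) * (C (j1:ℤ) + X)) *
              (JSm a (j1+1) * JSm b' j2 - JSm a j2 * JSm b' (j1+1))
          + ((C ((j1:ℤ)+1) * (C (j1:ℤ) + X)) * (C ((j2:ℤ)+1) * (C (j2:ℤ) + X))) *
              (JSm a (j1+1) * JSm b' (j2+1) - JSm a (j2+1) * JSm b' (j1+1)) := by
        rw [JSm_succ_succ a j1, JSm_succ_succ b' j2, JSm_succ_succ a j2, JSm_succ_succ b' j1]
        ring
      rw [key]
      simp only [coeff_add]
      refine add_nonneg (add_nonneg (add_nonneg ?_ ?_) ?_) ?_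
      · exact ih b' j1 j2 (by omega) hab' i
      · exact coeff_mul_nonneg (c_coeff_nonneg j2) (ih b' j1 (j2+1) (by omega) hab') i
      · exact coeff_mul_nonneg (c_coeff_nonneg j1) (ih b' (j1+1) j2 (by omega) hab') i
      · exact coeff_mul_nonneg
          (coeff_mul_nonneg (c_coeff_nonneg j1) (c_coeff_nonneg j2))
          (ih b' (j1+1) (j2+1) (by omega) hab') i

/-- For fixed `k`, the sequence `{JS(n,k;z-1)}_{n≥k}` is strongly `z`-log-concave:
for `k + 1 ≤ m ≤ n`, the polynomial `JS(m,k;z-1)·JS(n,k;z-1) − JS(m-1,k;z-1)·JS(n+1,k;z-1)`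
has nonnegative coefficients. -/
theorem JSm_column_strongly_log_concave (k m n : ℕ) (hm : k + 1 ≤ m) (hmn : m ≤ n) (i : ℕ) :
    0 ≤ (JSm m k * JSm n k - JSm (m - 1) k * JSm (n + 1) k).coeff i := by
  obtain ⟨m', rfl⟩ : ∃ m', m = m'+1 := ⟨m-1, by omega⟩
  have hsub : m' + 1 - 1 = m' := rfl
  rw [hsub]
  cases k with
  | zero =>
    rw [JSm_succ_zero m', JSm_succ_zero n]
    simp
  | succ j =>
    have key : JSm (m'+1) (j+1) * JSm n (j+1) - JSm m' (j+1) * JSm (n+1) (j+1)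
        = JSm m' j * JSm n (j+1) - JSm m' (j+1) * JSm n j := by
      rw [JSm_succ_succ m' j, JSm_succ_succ n j]
      ring
    rw [key]
    exact F_nonneg m' n j (j+1) (by omega) (by omega) i
end

section
/- The polynomial sequence {∑_{k=0}^n js(n,k;z) y^k}_{n≥0} is strongly {z,y}-log-convex: for all 1 ≤ m ≤ n, the bivariate polynomial (∏_{i=0}^{m-2}(y+i(z+i)))·(∏_{i=0}^{n}(y+i(z+i))) − (∏_{i=0}^{m-1}(y+i(z+i)))·(∏_{i=0}^{n-1}(y+i(z+i))) has nonnegative coefficients. -/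
open Polynomial Finset

/-- `∑_{k=0}^n js(n,k;z) y^k = ∏_{i=0}^{n-1}(y + i(z+i))`, a polynomial in `y`
with coefficients in `ℤ[z]`. -/
noncomputable def P (n : ℕ) : Polynomial (Polynomial ℤ) :=
  ∏ i ∈ Finset.range n,
    ((X : Polynomial (Polynomial ℤ)) + C (C (i : ℤ) * (Polynomial.X + C (i : ℤ))))

/-- Nonnegativity of all (bivariate) coefficients. -/
def NN (p : Polynomial (Polynomial ℤ)) : Prop := ∀ i j, 0 ≤ (p.coeff i).coeff j

lemma NN_mul {p q : Polynomial (Polynomial ℤ)} (hp : NN p) (hq : NN q) : NN (p * q) := by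
  intro i j
  rw [coeff_mul, finset_sum_coeff]
  refine Finset.sum_nonneg fun x _ => ?_
  rw [coeff_mul]
  exact Finset.sum_nonneg fun y _ => mul_nonneg (hp _ _) (hq _ _)

lemma NN_XC {q : Polynomial ℤ} (hq : ∀ j, 0 ≤ q.coeff j) :
    NN ((X : Polynomial (Polynomial ℤ)) + C q) := by
  intro i j
  rw [coeff_add, coeff_X, coeff_C]
  split_ifs <;> simp_all [coeff_one] <;> split_ifs <;> simp_all

lemma NN_C {q : Polynomial ℤ} (hq : ∀ j, 0 ≤ q.coeff j) :
    NN ((C q : Polynomial (Polynomial ℤ))) := by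
  intro i j
  rw [coeff_C]
  split_ifs <;> simp [hq]

lemma coeff_lin (a b : ℤ) (ha : 0 ≤ a) (hb : 0 ≤ b) (j : ℕ) :
    0 ≤ (C a * (X + C b) : Polynomial ℤ).coeff j := by
  rw [coeff_C_mul, coeff_add, coeff_X, coeff_C]
  split_ifs <;> simp_all <;> positivity

lemma NN_P (n : ℕ) : NN (P n) := by
  induction n with
  | zero =>
      intro i j
      simp only [P, Finset.range_zero, Finset.prod_empty, coeff_one]
      split_ifs <;> simp [coeff_one] <;> split_ifs <;> simp
  | succ n ih =>
      rw [P, prod_range_succ, ← P]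
      exact NN_mul ih (NN_XC (coeff_lin _ _ (Int.ofNat_nonneg n) (Int.ofNat_nonneg n)))

lemma P_succ (n : ℕ) : P (n + 1) =
    P n * ((X : Polynomial (Polynomial ℤ)) + C (C (n : ℤ) * (Polynomial.X + C (n : ℤ)))) := by
  rw [P, prod_range_succ, ← P]

/-- The sequence `{∑_{k=0}^n js(n,k;z) y^k}_{n≥0}` is strongly `{z,y}`-log-convex:
for `1 ≤ m ≤ n`, the bivariate polynomial
`(∏_{i=0}^{m-2}(y+i(z+i)))·(∏_{i=0}^{n}(y+i(z+i))) − (∏_{i=0}^{m-1}(y+i(z+i)))·(∏_{i=0}^{n-1}(y+i(z+i)))`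
has nonnegative coefficients. -/
theorem js_gf_strongly_log_convex (m n : ℕ) (hm : 1 ≤ m) (hmn : m ≤ n) (i j : ℕ) :
    0 ≤ ((P (m - 1) * P (n + 1) - P m * P n).coeff i).coeff j := by
  obtain ⟨k, rfl⟩ : ∃ k, m = k + 1 := ⟨m - 1, (Nat.succ_pred_eq_of_pos hm).symm⟩
  have hkn : (k : ℤ) ≤ n := by exact_mod_cast Nat.le_of_succ_le hmn
  have hd : (C ((n : ℤ)) * (Polynomial.X + C (n : ℤ)) : Polynomial ℤ)
      - C ((k : ℤ)) * (Polynomial.X + C (k : ℤ))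
      = C ((n : ℤ) - k) * (Polynomial.X + C ((n : ℤ) + k)) := by
    rw [C_sub, C_add]; ring
  have key : P (k + 1 - 1) * P (n + 1) - P (k + 1) * P n
      = P k * P n * C (C ((n : ℤ) - k) * (Polynomial.X + C ((n : ℤ) + k))) := by
    rw [show k + 1 - 1 = k from rfl, P_succ n, P_succ k, ← hd, C_sub]
    ring
  rw [key]
  exact NN_mul (NN_mul (NN_P k) (NN_P n))
    (NN_C (coeff_lin _ _ (by linarith) (by positivity))) i j
end

section
/- Suppose polynomials T_{n,k} in ℝ_+[x_1,...,x_d] satisfy T_{n,k} = a_{n,k} T_{n-1,k} + b_{n,k} T_{n-1,k-1} for 1 ≤ k ≤ n, with T_{0,0}=1, T_{n,-1}=T_{n,n+1}=0, where a_{n,k} ≥ a_{n,k-1} ≥ 0 and b_{n,k} ≥ b_{n,k-1} ≥ 0 coefficientwise for 1 ≤ k ≤ n. If for each n the sequence {T_{n,k}}_{k=0}^n is strongly x-log-concave, then for all 0 ≤ m ≤ n and 0 ≤ k ≤ l, the polynomial T_{m,k}·T_{n,l} − T_{m,l}·T_{n,k} has nonnegative coefficients. -/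
open Finset

/-- A multivariate polynomial has nonnegative coefficients. -/
def CoeffNonneg {d : ℕ} (f : MvPolynomial (Fin d) ℝ) : Prop :=
  ∀ mon, 0 ≤ f.coeff mon

lemma cn_zero {d : ℕ} : CoeffNonneg (0 : MvPolynomial (Fin d) ℝ) := by
  intro m; simp

lemma cn_add {d : ℕ} {f g : MvPolynomial (Fin d) ℝ} (hf : CoeffNonneg f)
    (hg : CoeffNonneg g) : CoeffNonneg (f + g) := by
  intro m
  rw [MvPolynomial.coeff_add]
  exact add_nonneg (hf m) (hg m)

lemma cn_mul {d : ℕ} {f g : MvPolynomial (Fin d) ℝ} (hf : CoeffNonneg f)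
    (hg : CoeffNonneg g) : CoeffNonneg (f * g) := by
  intro m
  rw [MvPolynomial.coeff_mul]
  exact Finset.sum_nonneg fun p _ => mul_nonneg (hf p.1) (hg p.2)

lemma cn_of_eq {d : ℕ} {f g : MvPolynomial (Fin d) ℝ} (h : g = f)
    (hf : CoeffNonneg f) : CoeffNonneg g := h ▸ hf

/-- Triangular recurrence lemma: if `T_{n,k} = a_{n,k} T_{n-1,k} + b_{n,k} T_{n-1,k-1}` with
`T_{0,0} = 1`, boundary zeros, coefficient polynomials `a_{n,k} ≥ a_{n,k-1} ≥ 0` and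
`b_{n,k} ≥ b_{n,k-1} ≥ 0` coefficientwise, and each row `{T_{n,k}}_{k=0}^n` is strongly
x-log-concave, then `T_{m,k}·T_{n,l} − T_{m,l}·T_{n,k}` has nonnegative coefficients for
`0 ≤ m ≤ n` and `0 ≤ k ≤ l`. -/
theorem triangular_recurrence_lemma (d : ℕ)
    (T a b : ℕ → ℤ → MvPolynomial (Fin d) ℝ)
    (hT0 : ∀ (n : ℕ) (k : ℤ), k < 0 ∨ (n : ℤ) < k → T n k = 0)
    (hT1 : T 0 0 = 1)
    (hTpos : ∀ (n : ℕ) (k : ℤ), CoeffNonneg (T n k))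
    (hrec : ∀ (n : ℕ) (k : ℤ), 0 ≤ k → k ≤ (n : ℤ) + 1 →
      T (n + 1) k = a (n + 1) k * T n k + b (n + 1) k * T n (k - 1))
    (ha : ∀ (n : ℕ) (k : ℤ), 1 ≤ k → k ≤ (n : ℤ) →
      CoeffNonneg (a n (k - 1)) ∧ CoeffNonneg (a n k - a n (k - 1)))
    (hb : ∀ (n : ℕ) (k : ℤ), 1 ≤ k → k ≤ (n : ℤ) →
      CoeffNonneg (b n (k - 1)) ∧ CoeffNonneg (b n k - b n (k - 1)))
    (hlc : ∀ (n : ℕ) (k l : ℤ), 1 ≤ k → k ≤ l →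
      CoeffNonneg (T n k * T n l - T n (k - 1) * T n (l + 1))) :
    ∀ (m n : ℕ) (k l : ℤ), m ≤ n → 0 ≤ k → k ≤ l →
      CoeffNonneg (T m k * T n l - T m l * T n k) := by
  -- generic facts about the coefficient sequences a and b
  have generic : ∀ c : ℕ → ℤ → MvPolynomial (Fin d) ℝ,
      (∀ (n : ℕ) (k : ℤ), 1 ≤ k → k ≤ (n : ℤ) →
        CoeffNonneg (c n (k - 1)) ∧ CoeffNonneg (c n k - c n (k - 1))) →
      (∀ (n : ℕ) (k : ℤ), 0 ≤ k → k ≤ (n : ℤ) + 1 → CoeffNonneg (c (n+1) k)) ∧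
      (∀ (n : ℕ) (k' l : ℤ), 0 ≤ k' → k' ≤ l → l ≤ (n : ℤ) + 1 →
        CoeffNonneg (c (n+1) l - c (n+1) k')) := by
    intro c hc
    have hNN : ∀ (n : ℕ) (k : ℤ), 0 ≤ k → k ≤ (n : ℤ) + 1 → CoeffNonneg (c (n+1) k) := by
      intro n k h0 h1
      by_cases hk : k ≤ (n : ℤ)
      · have h := (hc (n+1) (k+1) (by linarith) (by push_cast; linarith)).1
        rw [show k + 1 - 1 = k by ring] at h
        exact h
      · have hk' : k = (n : ℤ) + 1 := le_antisymm h1 (by linarith)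
        subst hk'
        have h := hc (n+1) ((n : ℤ) + 1) (by omega) (by push_cast; linarith)
        exact cn_of_eq (by ring) (cn_add h.2 h.1)
    refine ⟨hNN, ?_⟩
    have hMono : ∀ (n : ℕ) (j : ℕ) (k : ℤ), 0 ≤ k → k + (j : ℤ) ≤ (n : ℤ) + 1 →
        CoeffNonneg (c (n+1) (k + (j : ℤ)) - c (n+1) k) := by
      intro n j
      induction j with
      | zero =>
        intro k _ _
        push_cast
        exact cn_of_eq (by ring_nf) cn_zero
      | succ j ih =>
        intro k h0 h1
        push_cast at h1 ⊢
        have h2 := (hc (n+1) (k + (j : ℤ) + 1) (by linarith) (by push_cast; linarith)).2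
        have h3 := ih k h0 (by linarith)
        rw [show k + (j : ℤ) + 1 - 1 = k + (j : ℤ) by ring] at h2
        exact cn_of_eq (by ring) (cn_add h2 h3)
    intro n k' l h0 h1 h2
    have h := hMono n (l - k').toNat k' h0
      (by rw [Int.toNat_of_nonneg (by linarith)]; linarith)
    rw [Int.toNat_of_nonneg (by linarith : (0:ℤ) ≤ l - k'),
      show k' + (l - k') = l by ring] at h
    exact h
  obtain ⟨aNN, aDiff⟩ := generic a ha
  obtain ⟨bNN, bDiff⟩ := generic b hb
  -- single-row spread inequality
  have row : ∀ (n : ℕ) (j : ℕ) (k l : ℤ), k ≤ l →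
      CoeffNonneg (T n k * T n l - T n (l + (j : ℤ)) * T n (k - (j : ℤ))) := by
    intro n j
    induction j with
    | zero =>
      intro k l _
      push_cast
      exact cn_of_eq (by rw [add_zero, sub_zero, mul_comm (T n l), sub_self]) cn_zero
    | succ j ih =>
      intro k l hkl
      push_cast
      rw [show l + ((j : ℤ) + 1) = l + (j : ℤ) + 1 by ring,
        show k - ((j : ℤ) + 1) = k - (j : ℤ) - 1 by ring]
      by_cases hk : k - (j : ℤ) ≤ 0
      · rw [hT0 n (k - (j : ℤ) - 1) (Or.inl (by linarith)), mul_zero, sub_zero]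
        exact cn_mul (hTpos n k) (hTpos n l)
      · push_neg at hk
        have hlc' := hlc n (k - (j : ℤ)) (l + (j : ℤ)) (by linarith) (by linarith)
        rw [show k - (j : ℤ) - 1 = k - (j : ℤ) - 1 by ring] at hlc'
        have h3 := ih k l hkl
        exact cn_of_eq (by ring) (cn_add h3 hlc')
  have rowBase : ∀ (n : ℕ) (k l k' : ℤ), k' ≤ k → k' ≤ l →
      CoeffNonneg (T n k * T n l - T n (k + l - k') * T n k') := by
    intro n k l k' h1 h2
    rcases le_total k l with h | h
    · have hj := row n (k - k').toNat k l h
      rw [Int.toNat_of_nonneg (by linarith : (0:ℤ) ≤ k - k'),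
        show l + (k - k') = k + l - k' by ring, show k - (k - k') = k' by ring] at hj
      exact hj
    · have hj := row n (l - k').toNat l k h
      rw [Int.toNat_of_nonneg (by linarith : (0:ℤ) ≤ l - k'),
        show k + (l - k') = k + l - k' by ring, show l - (l - k') = k' by ring] at hj
      exact cn_of_eq (by ring) hj
  -- the main cross-row spread inequality
  have key : ∀ (n m : ℕ), m ≤ n → ∀ k l k' : ℤ, k' ≤ k → k' ≤ l →
      CoeffNonneg (T m k * T n l - T m (k + l - k') * T n k') := by
    intro n
    induction n with
    | zero =>
      intro m hm k l k' h1 h2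
      have : m = 0 := Nat.le_zero.mp hm
      subst this
      exact rowBase 0 k l k' h1 h2
    | succ n ih =>
      intro m hm k l k' h1 h2
      rcases Nat.lt_or_ge m (n+1) with hm' | hm'
      · have hmn : m ≤ n := Nat.lt_succ_iff.mp hm'
        by_cases hk' : k' < 0
        · rw [hT0 (n+1) k' (Or.inl hk'), mul_zero, sub_zero]
          exact cn_mul (hTpos m k) (hTpos (n+1) l)
        · push_neg at hk'
          by_cases hl : ((n:ℤ) + 1) < l
          · rw [hT0 (n+1) l (Or.inr (by push_cast; linarith)),
              hT0 m (k + l - k') (Or.inr (by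
                have : (m : ℤ) ≤ (n : ℤ) := by exact_mod_cast hmn
                linarith)), mul_zero, zero_mul, sub_zero]
            exact cn_zero
          · push_neg at hl
            have hkl : k' ≤ (n : ℤ) + 1 := le_trans h2 hl
            have hl0 : 0 ≤ l := le_trans hk' h2
            rw [hrec n l hl0 hl, hrec n k' hk' hkl]
            have term1 := cn_mul (aNN n k' hk' hkl) (ih m hmn k l k' h1 h2)
            have term2 := cn_mul (aDiff n k' l hk' h2 hl)
              (cn_mul (hTpos m k) (hTpos n l))
            have term3pre := ih m hmn k (l-1) (k'-1) (by linarith) (by linarith)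
            rw [show k + (l-1) - (k'-1) = k + l - k' by ring] at term3pre
            have term3 := cn_mul (bNN n k' hk' hkl) term3pre
            have term4 := cn_mul (bDiff n k' l hk' h2 hl)
              (cn_mul (hTpos m k) (hTpos n (l-1)))
            exact cn_of_eq (by ring) (cn_add (cn_add (cn_add term1 term2) term3) term4)
      · have : m = n + 1 := le_antisymm hm hm'
        subst this
        exact rowBase (n+1) k l k' h1 h2
  intro m n k l hmn hk hkl
  have h := key n m hmn k l k le_rfl hkl
  rw [show k + l - k = l by ring] at h
  exact h
end

section
/- Under the hypotheses of the triangular recurrence lemma (T_{n,k} = a_{n,k} T_{n-1,k} + b_{n,k} T_{n-1,k-1} with monotone nonnegative coefficients and strong x-log-concavity of each row), for fixed j ≥ 0 and n ≥ m ≥ 0, if c_{j,i} ≥ c_{j,i-1} coefficientwise for all i ≥ 1, then ∑_{i=0}^j (c_{j,j-i} − c_{j,i})·T_{n,j-i}·T_{m,i} has nonnegative coefficients. -/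
open Finset

namespace CN

variable {d : ℕ} {f g : MvPolynomial (Fin d) ℝ}

lemma zero : CoeffNonneg (0 : MvPolynomial (Fin d) ℝ) := fun mon => by simp

lemma add (hf : CoeffNonneg f) (hg : CoeffNonneg g) : CoeffNonneg (f + g) := fun mon => by
  rw [MvPolynomial.coeff_add]; exact add_nonneg (hf mon) (hg mon)

lemma mul (hf : CoeffNonneg f) (hg : CoeffNonneg g) : CoeffNonneg (f * g) := fun mon => by
  rw [MvPolynomial.coeff_mul]
  exact Finset.sum_nonneg fun p _ => mul_nonneg (hf _) (hg _)

lemma sum {ι : Type*} {s : Finset ι} {F : ι → MvPolynomial (Fin d) ℝ}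
    (h : ∀ i ∈ s, CoeffNonneg (F i)) : CoeffNonneg (∑ i ∈ s, F i) := fun mon => by
  rw [MvPolynomial.coeff_sum]
  exact Finset.sum_nonneg fun i hi => h i hi mon

/-- Telescoping: a family with nonnegative increments on `[1, N]` is monotone there. -/
lemma tel {N : ℤ} {f : ℤ → MvPolynomial (Fin d) ℝ}
    (h : ∀ k : ℤ, 1 ≤ k → k ≤ N → CoeffNonneg (f k - f (k - 1)))
    {k l : ℤ} (h0 : 0 ≤ k) (hkl : k ≤ l) (hl : l ≤ N) :
    CoeffNonneg (f l - f k) := by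
  obtain ⟨t, rfl⟩ := Int.le.dest hkl
  clear hkl
  induction t with
  | zero => simpa using (zero (d := d))
  | succ t ih =>
      have h2 : CoeffNonneg (f (k + t) - f k) := ih (by push_cast at hl ⊢; omega)
      have h1 : CoeffNonneg (f (k + (t + 1 : ℕ)) - f (k + t)) := by
        have := h (k + (t + 1 : ℕ)) (by push_cast; omega) hl
        have e : (k + ((t : ℤ) + 1)) - 1 = k + t := by ring
        push_cast at this ⊢
        rwa [e] at this
      have e : f (k + (t + 1 : ℕ)) - f k
          = (f (k + (t + 1 : ℕ)) - f (k + t)) + (f (k + t) - f k) := by ring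
      rw [e]; exact add h1 h2

/-- Pointwise nonnegativity of a monotone family on `[0, N]`. -/
lemma pt {N : ℤ} (hN : 1 ≤ N) {f : ℤ → MvPolynomial (Fin d) ℝ}
    (h : ∀ k : ℤ, 1 ≤ k → k ≤ N → CoeffNonneg (f (k - 1)) ∧ CoeffNonneg (f k - f (k - 1)))
    {k : ℤ} (h0 : 0 ≤ k) (hk : k ≤ N) : CoeffNonneg (f k) := by
  rcases lt_or_eq_of_le hk with h' | rfl
  · have := (h (k + 1) (by omega) (by omega)).1
    rwa [show k + 1 - 1 = k by ring] at this
  · have h1 := h k hN le_rfl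
    have e : f k = (f k - f (k - 1)) + f (k - 1) := by ring
    rw [e]; exact add h1.2 h1.1

end CN

/-- Cross-row strong log-concavity: for `m ≤ n` and `1 ≤ k ≤ l`,
`T n k * T m l - T n (k-1) * T m (l+1)` has nonnegative coefficients. -/
lemma claimD {d : ℕ} (T a b : ℕ → ℤ → MvPolynomial (Fin d) ℝ)
    (hT0 : ∀ (n : ℕ) (k : ℤ), k < 0 ∨ (n : ℤ) < k → T n k = 0)
    (hTpos : ∀ (n : ℕ) (k : ℤ), CoeffNonneg (T n k))
    (hrec : ∀ (n : ℕ) (k : ℤ), 0 ≤ k → k ≤ (n : ℤ) + 1 →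
      T (n + 1) k = a (n + 1) k * T n k + b (n + 1) k * T n (k - 1))
    (ha : ∀ (n : ℕ) (k : ℤ), 1 ≤ k → k ≤ (n : ℤ) →
      CoeffNonneg (a n (k - 1)) ∧ CoeffNonneg (a n k - a n (k - 1)))
    (hb : ∀ (n : ℕ) (k : ℤ), 1 ≤ k → k ≤ (n : ℤ) →
      CoeffNonneg (b n (k - 1)) ∧ CoeffNonneg (b n k - b n (k - 1)))
    (hlc : ∀ (n : ℕ) (k l : ℤ), 1 ≤ k → k ≤ l →
      CoeffNonneg (T n k * T n l - T n (k - 1) * T n (l + 1)))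
    (m : ℕ) : ∀ n : ℕ, m ≤ n → ∀ k l : ℤ, 1 ≤ k → k ≤ l →
      CoeffNonneg (T n k * T m l - T n (k - 1) * T m (l + 1)) := by
  intro n hm
  induction n, hm using Nat.le_induction with
  | base => exact fun k l hk hkl => hlc m k l hk hkl
  | succ n hm ih =>
    intro k l hk hkl
    by_cases hml : (m : ℤ) < l
    · rw [hT0 m l (Or.inr hml), hT0 m (l + 1) (Or.inr (by omega)), mul_zero, mul_zero,
        sub_zero]
      exact CN.zero
    · push_neg at hml
      have hln : l ≤ (n : ℤ) := le_trans hml (by exact_mod_cast hm)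
      rw [hrec n k (by omega) (by omega), hrec n (k - 1) (by omega) (by omega)]
      have e : (a (n + 1) k * T n k + b (n + 1) k * T n (k - 1)) * T m l -
          (a (n + 1) (k - 1) * T n (k - 1) + b (n + 1) (k - 1) * T n (k - 1 - 1)) * T m (l + 1)
          = a (n + 1) (k - 1) * (T n k * T m l - T n (k - 1) * T m (l + 1))
            + (a (n + 1) k - a (n + 1) (k - 1)) * (T n k * T m l)
            + b (n + 1) (k - 1) * (T n (k - 1) * T m l - T n (k - 1 - 1) * T m (l + 1))
            + (b (n + 1) k - b (n + 1) (k - 1)) * (T n (k - 1) * T m l) := by ring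
      rw [e]
      have hkn1 : k ≤ ((n + 1 : ℕ) : ℤ) := by push_cast; omega
      have haK := ha (n + 1) k hk hkn1
      have hbK := hb (n + 1) k hk hkn1
      have bracket3 : CoeffNonneg (T n (k - 1) * T m l - T n (k - 1 - 1) * T m (l + 1)) := by
        rcases eq_or_lt_of_le hk with rfl | hk2
        · rw [show (1 : ℤ) - 1 - 1 = -1 by ring, hT0 n (-1) (Or.inl (by norm_num)),
            zero_mul, sub_zero]
          exact CN.mul (hTpos n _) (hTpos m l)
        · exact ih (k - 1) l (by omega) (by omega)
      exact CN.add (CN.add (CN.add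
        (CN.mul haK.1 (ih k l hk hkl))
        (CN.mul haK.2 (CN.mul (hTpos n k) (hTpos m l))))
        (CN.mul hbK.1 bracket3))
        (CN.mul hbK.2 (CN.mul (hTpos n _) (hTpos m l)))

/-- Part one of the triangular recurrence lemma: for `m ≤ n` and `k ≤ l`,
`T n l * T m k - T n k * T m l` has nonnegative coefficients. -/
lemma claimA {d : ℕ} (T a b : ℕ → ℤ → MvPolynomial (Fin d) ℝ)
    (hT0 : ∀ (n : ℕ) (k : ℤ), k < 0 ∨ (n : ℤ) < k → T n k = 0)
    (hTpos : ∀ (n : ℕ) (k : ℤ), CoeffNonneg (T n k))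
    (hrec : ∀ (n : ℕ) (k : ℤ), 0 ≤ k → k ≤ (n : ℤ) + 1 →
      T (n + 1) k = a (n + 1) k * T n k + b (n + 1) k * T n (k - 1))
    (ha : ∀ (n : ℕ) (k : ℤ), 1 ≤ k → k ≤ (n : ℤ) →
      CoeffNonneg (a n (k - 1)) ∧ CoeffNonneg (a n k - a n (k - 1)))
    (hb : ∀ (n : ℕ) (k : ℤ), 1 ≤ k → k ≤ (n : ℤ) →
      CoeffNonneg (b n (k - 1)) ∧ CoeffNonneg (b n k - b n (k - 1)))
    (hlc : ∀ (n : ℕ) (k l : ℤ), 1 ≤ k → k ≤ l →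
      CoeffNonneg (T n k * T n l - T n (k - 1) * T n (l + 1)))
    (m : ℕ) : ∀ n : ℕ, m ≤ n → ∀ k l : ℤ, k ≤ l →
      CoeffNonneg (T n l * T m k - T n k * T m l) := by
  intro n hm
  induction n, hm using Nat.le_induction with
  | base =>
    intro k l _
    rw [show T m l * T m k - T m k * T m l = 0 by ring]
    exact CN.zero
  | succ n hm ih =>
    intro k l hkl
    by_cases hkneg : k < 0
    · rw [hT0 m k (Or.inl hkneg), hT0 (n + 1) k (Or.inl hkneg), mul_zero, zero_mul, sub_zero]
      exact CN.zero
    by_cases hlbig : ((n + 1 : ℕ) : ℤ) < l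
    · rw [hT0 (n + 1) l (Or.inr hlbig), hT0 m l (Or.inr (by push_cast at hlbig; omega)),
        zero_mul, mul_zero, sub_zero]
      exact CN.zero
    push_neg at hkneg hlbig
    have hk0 : 0 ≤ k := hkneg
    have hl1 : l ≤ (n : ℤ) + 1 := by push_cast at hlbig; omega
    rw [hrec n l (by omega) hl1, hrec n k hk0 (by omega)]
    have e : (a (n + 1) l * T n l + b (n + 1) l * T n (l - 1)) * T m k -
        (a (n + 1) k * T n k + b (n + 1) k * T n (k - 1)) * T m l
        = a (n + 1) k * (T n l * T m k - T n k * T m l)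
          + (a (n + 1) l - a (n + 1) k) * (T n l * T m k)
          + b (n + 1) k * (T n (l - 1) * T m k - T n (k - 1) * T m l)
          + (b (n + 1) l - b (n + 1) k) * (T n (l - 1) * T m k) := by ring
    rw [e]
    have hN1 : (1 : ℤ) ≤ ((n + 1 : ℕ) : ℤ) := by push_cast; omega
    have hlN : l ≤ ((n + 1 : ℕ) : ℤ) := by push_cast; omega
    have haknn : CoeffNonneg (a (n + 1) k) :=
      CN.pt hN1 (fun k hk1 hkN => ha (n + 1) k hk1 hkN) hk0 (le_trans hkl hlN)
    have hbknn : CoeffNonneg (b (n + 1) k) :=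
      CN.pt hN1 (fun k hk1 hkN => hb (n + 1) k hk1 hkN) hk0 (le_trans hkl hlN)
    have hadiff : CoeffNonneg (a (n + 1) l - a (n + 1) k) :=
      CN.tel (fun k hk1 hkN => (ha (n + 1) k hk1 hkN).2) hk0 hkl hlN
    have hbdiff : CoeffNonneg (b (n + 1) l - b (n + 1) k) :=
      CN.tel (fun k hk1 hkN => (hb (n + 1) k hk1 hkN).2) hk0 hkl hlN
    have bracket3 : CoeffNonneg (T n (l - 1) * T m k - T n (k - 1) * T m l) := by
      rcases eq_or_lt_of_le hkl with rfl | hkl2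
      · rw [show T n (k - 1) * T m k - T n (k - 1) * T m k = 0 by ring]
        exact CN.zero
      rcases eq_or_lt_of_le hk0 with rfl | hk1
      · rw [show (0 : ℤ) - 1 = -1 by ring, hT0 n (-1) (Or.inl (by norm_num)),
          zero_mul, sub_zero]
        exact CN.mul (hTpos n _) (hTpos m _)
      · have d1 := ih k (l - 1) (by omega)
        have d2 := claimD T a b hT0 hTpos hrec ha hb hlc m n hm k (l - 1) (by omega) (by omega)
        have e2 : T n (l - 1) * T m k - T n (k - 1) * T m l
            = (T n (l - 1) * T m k - T n k * T m (l - 1))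
              + (T n k * T m (l - 1) - T n (k - 1) * T m (l - 1 + 1)) := by
          rw [show l - 1 + 1 = l by ring]; ring
        rw [e2]; exact CN.add d1 d2
    exact CN.add (CN.add (CN.add
      (CN.mul haknn (ih k l hkl))
      (CN.mul hadiff (CN.mul (hTpos n l) (hTpos m k))))
      (CN.mul hbknn bracket3))
      (CN.mul hbdiff (CN.mul (hTpos n _) (hTpos m k)))

/-- Telescoping for the ℕ-indexed coefficient family `c`. -/
lemma cmono {d : ℕ} (c : ℕ → MvPolynomial (Fin d) ℝ)
    (hc : ∀ i : ℕ, 1 ≤ i → CoeffNonneg (c i - c (i - 1))) :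
    ∀ k l : ℕ, k ≤ l → CoeffNonneg (c l - c k) := by
  intro k l hkl
  induction l, hkl using Nat.le_induction with
  | base => rw [show c k - c k = 0 by ring]; exact CN.zero
  | succ l hkl ih =>
    have h1 := hc (l + 1) (by omega)
    rw [show l + 1 - 1 = l by omega] at h1
    rw [show c (l + 1) - c k = (c (l + 1) - c l) + (c l - c k) by ring]
    exact CN.add h1 ih

/-- Under the hypotheses of the triangular recurrence lemma, for fixed `j ≥ 0` and
`n ≥ m ≥ 0`, if `c_{j,i} ≥ c_{j,i-1}` coefficientwise for all `i ≥ 1`, then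
`∑_{i=0}^j (c_{j,j-i} − c_{j,i})·T_{n,j-i}·T_{m,i}` has nonnegative coefficients. -/
theorem triangular_recurrence_lemma_part_two (d : ℕ)
    (T a b : ℕ → ℤ → MvPolynomial (Fin d) ℝ)
    (hT0 : ∀ (n : ℕ) (k : ℤ), k < 0 ∨ (n : ℤ) < k → T n k = 0)
    (hT1 : T 0 0 = 1)
    (hTpos : ∀ (n : ℕ) (k : ℤ), CoeffNonneg (T n k))
    (hrec : ∀ (n : ℕ) (k : ℤ), 0 ≤ k → k ≤ (n : ℤ) + 1 →
      T (n + 1) k = a (n + 1) k * T n k + b (n + 1) k * T n (k - 1))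
    (ha : ∀ (n : ℕ) (k : ℤ), 1 ≤ k → k ≤ (n : ℤ) →
      CoeffNonneg (a n (k - 1)) ∧ CoeffNonneg (a n k - a n (k - 1)))
    (hb : ∀ (n : ℕ) (k : ℤ), 1 ≤ k → k ≤ (n : ℤ) →
      CoeffNonneg (b n (k - 1)) ∧ CoeffNonneg (b n k - b n (k - 1)))
    (hlc : ∀ (n : ℕ) (k l : ℤ), 1 ≤ k → k ≤ l →
      CoeffNonneg (T n k * T n l - T n (k - 1) * T n (l + 1)))
    (j : ℕ) (c : ℕ → MvPolynomial (Fin d) ℝ)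
    (hc : ∀ i : ℕ, 1 ≤ i → CoeffNonneg (c i - c (i - 1)))
    (m n : ℕ) (hmn : m ≤ n) :
    CoeffNonneg (∑ i ∈ Finset.range (j + 1),
      (c (j - i) - c i) * T n ((j : ℤ) - (i : ℤ)) * T m (i : ℤ)) := by
  have hA := claimA T a b hT0 hTpos hrec ha hb hlc m n hmn
  set S := ∑ i ∈ Finset.range (j + 1),
      (c (j - i) - c i) * T n ((j : ℤ) - (i : ℤ)) * T m (i : ℤ) with hS
  have hrefl : S = ∑ i ∈ Finset.range (j + 1),
      (c i - c (j - i)) * T n (i : ℤ) * T m ((j : ℤ) - (i : ℤ)) := by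
    rw [hS, ← Finset.sum_range_reflect]
    apply Finset.sum_congr rfl
    intro i hi
    have hij : i ≤ j := by have := Finset.mem_range.mp hi; omega
    rw [show j + 1 - 1 - i = j - i from by omega, show j - (j - i) = i from by omega,
      show ((j - i : ℕ) : ℤ) = (j : ℤ) - (i : ℤ) from by omega,
      show (j : ℤ) - ((j : ℤ) - (i : ℤ)) = (i : ℤ) from by ring]
  have key : CoeffNonneg (S + S) := by
    nth_rewrite 2 [hrefl]
    rw [hS, ← Finset.sum_add_distrib]
    apply CN.sum
    intro i hi
    have hij : i ≤ j := by
      have := Finset.mem_range.mp hi; omega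
    by_cases h2 : 2 * i ≤ j
    · have e : (c (j - i) - c i) * T n ((j : ℤ) - (i : ℤ)) * T m (i : ℤ)
          + (c i - c (j - i)) * T n (i : ℤ) * T m ((j : ℤ) - (i : ℤ))
          = (c (j - i) - c i) *
            (T n ((j : ℤ) - (i : ℤ)) * T m (i : ℤ) - T n (i : ℤ) * T m ((j : ℤ) - (i : ℤ))) := by
        ring
      rw [e]
      exact CN.mul (cmono c hc i (j - i) (by omega))
        (hA (i : ℤ) ((j : ℤ) - (i : ℤ)) (by omega))
    · have e : (c (j - i) - c i) * T n ((j : ℤ) - (i : ℤ)) * T m (i : ℤ)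
          + (c i - c (j - i)) * T n (i : ℤ) * T m ((j : ℤ) - (i : ℤ))
          = (c i - c (j - i)) *
            (T n (i : ℤ) * T m ((j : ℤ) - (i : ℤ)) - T n ((j : ℤ) - (i : ℤ)) * T m (i : ℤ)) := by
        ring
      rw [e]
      exact CN.mul (cmono c hc (j - i) i (by omega))
        (hA ((j : ℤ) - (i : ℤ)) (i : ℤ) (by omega))
  intro mon
  have h2 := key mon
  rw [MvPolynomial.coeff_add] at h2
  linarith
end

section
/- The coefficient polynomials Q_{n,k}(x,t) defined by Q_n(x,y,1,t) = ∑_{k=0}^{n-1} Q_{n,k}(x,t) y^k satisfy Q_{1,0}=1 and, for n ≥ 2, Q_{n,k}(x,t) = [x + n − 1 + t(n + k − 1)]·Q_{n-1,k}(x,t) + (n + k − 2)·Q_{n-1,k-1}(x,t), where Q_{n,k}=0 if k ≥ n or k < 0. -/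
open Finset

/-- The generalized Ramanujan polynomials `Q_n(x,y,z,t)` of Chapoton, in the variables
`x = X 0`, `y = X 1`, `z = X 2`, `t = X 3`:
`Q_1 = 1` and `Q_{n+1} = [x + nz + (y+t)(n + y∂_y)] Q_n`. -/
noncomputable def Q : ℕ → MvPolynomial (Fin 4) ℤ
  | 0 => 0
  | 1 => 1
  | n+2 =>
    (MvPolynomial.X 0 + MvPolynomial.C ((n : ℤ) + 1) * MvPolynomial.X 2) * Q (n+1) +
      (MvPolynomial.X 1 + MvPolynomial.X 3) *
        (MvPolynomial.C ((n : ℤ) + 1) * Q (n+1) +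
          MvPolynomial.X 1 * MvPolynomial.pderiv 1 (Q (n+1)))

/-- `Q_n(x,y,1,t)` as a polynomial in `y` with coefficients in `ℤ[x,t]`
(`x = X 0`, `t = X 1` in the coefficient ring). -/
noncomputable def Qy (n : ℕ) : Polynomial (MvPolynomial (Fin 2) ℤ) :=
  MvPolynomial.aeval
    (fun i : Fin 4 =>
      if i = 0 then Polynomial.C (MvPolynomial.X 0)
      else if i = 1 then Polynomial.X
      else if i = 2 then 1
      else Polynomial.C (MvPolynomial.X 1)) (Q n)

/-- `Q_{n,k}(x,t)`: the coefficient of `y^k` in `Q_n(x,y,1,t)`. -/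
noncomputable def Qnk (n k : ℕ) : MvPolynomial (Fin 2) ℤ := (Qy n).coeff k

noncomputable def f4 : Fin 4 → Polynomial (MvPolynomial (Fin 2) ℤ) :=
  fun i : Fin 4 =>
      if i = 0 then Polynomial.C (MvPolynomial.X 0)
      else if i = 1 then Polynomial.X
      else if i = 2 then 1
      else Polynomial.C (MvPolynomial.X 1)

lemma Qy_eq (n : ℕ) : Qy n = MvPolynomial.aeval f4 (Q n) := rfl

lemma aeval_pderiv (p : MvPolynomial (Fin 4) ℤ) :
    MvPolynomial.aeval f4 (MvPolynomial.pderiv 1 p) =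
      Polynomial.derivative (MvPolynomial.aeval f4 p) := by
  induction p using MvPolynomial.induction_on with
  | C a => simp [MvPolynomial.algebraMap_eq]
  | add p q hp hq => simp [hp, hq]
  | mul_X p i hp =>
    rw [MvPolynomial.pderiv_mul, map_add, map_mul, hp, map_mul, map_mul,
      Polynomial.derivative_mul]
    congr 1
    fin_cases i <;> simp [MvPolynomial.pderiv_X, f4, Pi.single_apply]

lemma Qy_one : Qy 1 = 1 := by
  rw [Qy_eq]; show MvPolynomial.aeval f4 (1 : MvPolynomial (Fin 4) ℤ) = 1; simp

lemma Qy_succ (n : ℕ) :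
    Qy (n+2) =
      Polynomial.C (MvPolynomial.X 0 + MvPolynomial.C ((n : ℤ) + 1)) * Qy (n+1) +
        (Polynomial.X + Polynomial.C (MvPolynomial.X 1)) *
          (Polynomial.C (MvPolynomial.C ((n : ℤ) + 1)) * Qy (n+1) +
            Polynomial.X * Polynomial.derivative (Qy (n+1))) := by
  rw [Qy_eq, Qy_eq (n+1)]
  show MvPolynomial.aeval f4 (Q (n+2)) = _
  simp only [Q, map_add, map_mul, aeval_pderiv]
  simp [f4, MvPolynomial.algebraMap_eq]

lemma natDegree_Qy (n : ℕ) : (Qy (n+1)).natDegree ≤ n := by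
  induction n with
  | zero => simp [Qy_one]
  | succ n ih =>
    rw [Qy_succ]
    apply le_trans (Polynomial.natDegree_add_le _ _)
    apply max_le
    · exact le_trans (Polynomial.natDegree_C_mul_le _ _) (le_trans ih (by omega))
    · apply le_trans (Polynomial.natDegree_mul_le)
      have h1 : (Polynomial.X + Polynomial.C (MvPolynomial.X 1) :
          Polynomial (MvPolynomial (Fin 2) ℤ)).natDegree ≤ 1 :=
        le_trans (Polynomial.natDegree_add_le _ _)
          (by simp [Polynomial.natDegree_X])
      have h2 : (Polynomial.C (MvPolynomial.C ((n : ℤ) + 1)) * Qy (n+1) +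
          Polynomial.X * Polynomial.derivative (Qy (n+1))).natDegree ≤ n := by
        apply le_trans (Polynomial.natDegree_add_le _ _)
        apply max_le
        · exact le_trans (Polynomial.natDegree_C_mul_le _ _) ih
        · rcases eq_or_ne (Polynomial.derivative (Qy (n+1))) 0 with h | h
          · simp [h]
          · apply le_trans (Polynomial.natDegree_mul_le)
            have : (Polynomial.derivative (Qy (n+1))).natDegree < (Qy (n+1)).natDegree := by
              apply Polynomial.natDegree_derivative_lt
              intro hd
              exact h (Polynomial.derivative_of_natDegree_zero hd)
            simp [Polynomial.natDegree_X]
            omega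
      omega

lemma QnkA (n : ℕ) :
    Qnk (n+2) 0 =
      (MvPolynomial.X 0 + MvPolynomial.C ((n : ℤ) + 1) +
        MvPolynomial.X 1 * MvPolynomial.C ((n : ℤ) + 1)) * Qnk (n+1) 0 := by
  unfold Qnk
  rw [Qy_succ]
  simp [Polynomial.coeff_add, Polynomial.coeff_C_mul, Polynomial.mul_coeff_zero,
    Polynomial.coeff_X_zero, mul_add, add_mul, map_add]
  push_cast
  ring

lemma QnkB (n k : ℕ) :
    Qnk (n+2) (k+1) =
      (MvPolynomial.X 0 + MvPolynomial.C ((n : ℤ) + 1) +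
          MvPolynomial.X 1 * MvPolynomial.C ((n : ℤ) + 2 + (k : ℤ))) * Qnk (n+1) (k+1) +
        MvPolynomial.C ((n : ℤ) + 1 + (k : ℤ)) * Qnk (n+1) k := by
  unfold Qnk
  rw [Qy_succ, add_mul]
  cases k with
  | zero =>
    simp [Polynomial.coeff_add, Polynomial.coeff_C_mul, Polynomial.coeff_X_mul,
      Polynomial.mul_coeff_zero, Polynomial.coeff_derivative, mul_add, add_mul, map_add]
    push_cast
    ring
  | succ k =>
    simp [Polynomial.coeff_add, Polynomial.coeff_C_mul, Polynomial.coeff_X_mul,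
      Polynomial.coeff_derivative, mul_add, add_mul, map_add]
    push_cast
    ring

/-- The coefficients `Q_{n,k}(x,t)` of `Q_n(x,y,1,t) = ∑_{k=0}^{n-1} Q_{n,k}(x,t) y^k`
satisfy `Q_{1,0} = 1`, vanish for `k ≥ n`, and for `n ≥ 2` satisfy
`Q_{n,k} = [x + n−1 + t(n+k−1)]·Q_{n-1,k} + (n+k−2)·Q_{n-1,k-1}`. -/
theorem Qnk_recurrence :
    Qnk 1 0 = 1 ∧
    (∀ n k : ℕ, 1 ≤ n → n ≤ k → Qnk n k = 0) ∧
    (∀ n : ℕ, 2 ≤ n →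
      Qnk n 0 =
        (MvPolynomial.X 0 + MvPolynomial.C ((n : ℤ) - 1) +
            MvPolynomial.X 1 * MvPolynomial.C ((n : ℤ) - 1)) * Qnk (n - 1) 0) ∧
    (∀ n k : ℕ, 2 ≤ n →
      Qnk n (k + 1) =
        (MvPolynomial.X 0 + MvPolynomial.C ((n : ℤ) - 1) +
            MvPolynomial.X 1 * MvPolynomial.C ((n : ℤ) + (k : ℤ))) * Qnk (n - 1) (k + 1) +
          MvPolynomial.C ((n : ℤ) + (k : ℤ) - 1) * Qnk (n - 1) k) := by
  refine ⟨by simp [Qnk, Qy_one], ?_, ?_, ?_⟩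
  · intro n k hn hk
    obtain ⟨m, rfl⟩ : ∃ m, n = m + 1 := ⟨n - 1, by omega⟩
    exact Polynomial.coeff_eq_zero_of_natDegree_lt
      (lt_of_le_of_lt (natDegree_Qy m) (by omega))
  · intro n hn
    obtain ⟨m, rfl⟩ : ∃ m, n = m + 2 := ⟨n - 2, by omega⟩
    rw [show m + 2 - 1 = m + 1 from rfl]
    rw [QnkA]
    simp only [map_add, map_sub, map_one, map_natCast]
    push_cast
    ring
  · intro n k hn
    obtain ⟨m, rfl⟩ : ∃ m, n = m + 2 := ⟨n - 2, by omega⟩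
    rw [show m + 2 - 1 = m + 1 from rfl]
    rw [QnkB]
    simp only [map_add, map_sub, map_one, map_natCast, map_ofNat]
    push_cast
    ring
end

section
/- The generalized Ramanujan polynomials are strongly {x,y,z,t}-log-convex: for all 2 ≤ m ≤ n, the polynomial Q_{m-1}(x,y,z,t)·Q_{n+1}(x,y,z,t) − Q_m(x,y,z,t)·Q_n(x,y,z,t) has nonnegative integer coefficients. -/
open Finset

open MvPolynomial

noncomputable def Th (p : MvPolynomial (Fin 4) ℤ) : MvPolynomial (Fin 4) ℤ :=
  X 1 * pderiv 1 p

lemma Th_monomial (s : Fin 4 →₀ ℕ) (a : ℤ) :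
    Th (monomial s a) = monomial s ((s 1 : ℤ) * a) := by
  rw [Th, pderiv_monomial]
  rcases Nat.eq_zero_or_pos (s 1) with h | h
  · simp [h]
  · rw [X, monomial_mul]
    congr 1
    · rw [add_comm, tsub_add_cancel_of_le]
      exact Finsupp.single_le_iff.mpr h
    · ring

lemma coeff_Th (p : MvPolynomial (Fin 4) ℤ) (m : Fin 4 →₀ ℕ) :
    coeff m (Th p) = (m 1 : ℤ) * coeff m p := by
  induction p using MvPolynomial.induction_on' with
  | monomial s a =>
      rw [Th_monomial, coeff_monomial, coeff_monomial]
      split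
      · next h => subst h; ring
      · ring
  | add p q hp hq =>
      have : Th (p + q) = Th p + Th q := by simp [Th, map_add, mul_add]
      rw [this, coeff_add, coeff_add, hp, hq]; ring

lemma Th_add (p q : MvPolynomial (Fin 4) ℤ) : Th (p + q) = Th p + Th q := by
  simp [Th, map_add, mul_add]

lemma Th_iter_add (i : ℕ) (p q : MvPolynomial (Fin 4) ℤ) :
    Th^[i] (p + q) = Th^[i] p + Th^[i] q := by
  induction i generalizing p q with
  | zero => simp
  | succ i ih => rw [Function.iterate_succ_apply, Th_add, ih,
      Function.iterate_succ_apply, Function.iterate_succ_apply]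

lemma coeff_Th_iter (i : ℕ) (p : MvPolynomial (Fin 4) ℤ) (m : Fin 4 →₀ ℕ) :
    coeff m (Th^[i] p) = (m 1 : ℤ) ^ i * coeff m p := by
  induction i generalizing p with
  | zero => simp
  | succ i ih => rw [Function.iterate_succ_apply', coeff_Th, ih]; ring

def Pos (p : MvPolynomial (Fin 4) ℤ) : Prop := ∀ m, 0 ≤ coeff m p

lemma Pos.add {p q} (hp : Pos p) (hq : Pos q) : Pos (p + q) := fun m => by
  rw [coeff_add]; exact add_nonneg (hp m) (hq m)

lemma Pos.mul {p q} (hp : Pos p) (hq : Pos q) : Pos (p * q) := fun m => by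
  rw [coeff_mul]
  exact Finset.sum_nonneg fun x _ => mul_nonneg (hp x.1) (hq x.2)

lemma Pos.th {p} (hp : Pos p) : Pos (Th p) := fun m => by
  rw [coeff_Th]; exact mul_nonneg (by positivity) (hp m)

lemma Pos.th_iter {p} (hp : Pos p) (i : ℕ) : Pos (Th^[i] p) := fun m => by
  rw [coeff_Th_iter]; exact mul_nonneg (by positivity) (hp m)

lemma Pos_X (i : Fin 4) : Pos (X i) := fun m => by
  rw [coeff_X']; split <;> simp

lemma Pos_C {a : ℤ} (ha : 0 ≤ a) : Pos (C a) := fun m => by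
  rw [coeff_C]; split <;> simp [ha]

lemma Pos_zero : Pos (0 : MvPolynomial (Fin 4) ℤ) := fun m => by simp

lemma Pos_one : Pos (1 : MvPolynomial (Fin 4) ℤ) := Pos_C (by norm_num)

lemma Pos_Q (n : ℕ) : Pos (Q n) := by
  induction n using Nat.strong_induction_on with
  | _ n ih =>
    match n with
    | 0 => exact Pos_zero
    | 1 => exact Pos_one
    | n+2 =>
      have h1 : Pos (Q (n+1)) := ih (n+1) (by omega)
      have hx1 : Pos (X 1 * pderiv 1 (Q (n+1))) := h1.th
      rw [Q]
      exact (((Pos_X 0).add ((Pos_C (by positivity)).mul (Pos_X 2))).mul h1).add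
        (((Pos_X 1).add (Pos_X 3)).mul (((Pos_C (by positivity)).mul h1).add hx1))

/-- The symmetrization base case: `Q_a · Θ^(i+1) Q_a − Θ Q_a · Θ^i Q_a ≥ 0`. -/
lemma sym (a i : ℕ) :
    Pos (Q a * Th (Th^[i] (Q a)) - Th (Q a) * Th^[i] (Q a)) := by
  intro m
  rw [coeff_sub, coeff_mul, coeff_mul]
  rw [← Finset.sum_sub_distrib]
  set c : (Fin 4 →₀ ℕ) → ℤ := fun s => coeff s (Q a) with hc
  have hterm : ∀ x : (Fin 4 →₀ ℕ) × (Fin 4 →₀ ℕ),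
      coeff x.1 (Q a) * coeff x.2 (Th (Th^[i] (Q a)))
        - coeff x.1 (Th (Q a)) * coeff x.2 (Th^[i] (Q a))
      = c x.1 * c x.2 * ((x.2 1 : ℤ) ^ i * (x.2 1) - (x.1 1) * (x.2 1 : ℤ) ^ i) := by
    intro x
    simp only [coeff_Th, coeff_Th_iter, hc]
    ring
  simp only [hterm]
  set F : (Fin 4 →₀ ℕ) × (Fin 4 →₀ ℕ) → ℤ :=
    fun x => c x.1 * c x.2 * ((x.2 1 : ℤ) ^ i * (x.2 1) - (x.1 1) * (x.2 1 : ℤ) ^ i) with hF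
  have hswap : ∑ x ∈ antidiagonal m, F x = ∑ x ∈ antidiagonal m, F x.swap := by
    conv_lhs => rw [← Finset.HasAntidiagonal.map_swap_antidiagonal]
    rw [Finset.sum_map]
    rfl
  have h2 : 2 * ∑ x ∈ antidiagonal m, F x
      = ∑ x ∈ antidiagonal m, (F x + F x.swap) := by
    rw [Finset.sum_add_distrib, ← hswap]; ring
  have hge : 0 ≤ ∑ x ∈ antidiagonal m, (F x + F x.swap) := by
    apply Finset.sum_nonneg
    intro x _
    have hcx1 : 0 ≤ c x.1 := Pos_Q a x.1
    have hcx2 : 0 ≤ c x.2 := Pos_Q a x.2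
    have key : F x + F x.swap
        = c x.1 * c x.2 * (((x.2 1 : ℤ) - (x.1 1)) * ((x.2 1 : ℤ) ^ i - (x.1 1 : ℤ) ^ i)) := by
      simp only [hF, Prod.fst_swap, Prod.snd_swap]
      ring
    rw [key]
    apply mul_nonneg (mul_nonneg hcx1 hcx2)
    rcases le_total (x.1 1) (x.2 1) with h | h
    · have h' : ((x.1 1 : ℤ)) ≤ ((x.2 1 : ℤ)) := by exact_mod_cast h
      exact mul_nonneg (by linarith)
        (by have := pow_le_pow_left₀ (by positivity : (0:ℤ) ≤ (x.1 1 : ℤ)) h' i; linarith)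
    · have h' : ((x.2 1 : ℤ)) ≤ ((x.1 1 : ℤ)) := by exact_mod_cast h
      have h1 : ((x.2 1 : ℤ)) - (x.1 1) ≤ 0 := by linarith
      have h2' : ((x.2 1 : ℤ)) ^ i - (x.1 1 : ℤ) ^ i ≤ 0 := by
        have := pow_le_pow_left₀ (by positivity : (0:ℤ) ≤ (x.2 1 : ℤ)) h' i; linarith
      have := mul_nonneg (neg_nonneg.mpr h1) (neg_nonneg.mpr h2')
      rw [neg_mul_neg] at this; exact this
  linarith

/-- The Θ-Wronskian against `Q a`. -/
noncomputable def w (a : ℕ) (H : MvPolynomial (Fin 4) ℤ) : MvPolynomial (Fin 4) ℤ :=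
  Q a * Th H - Th (Q a) * H

/-- The key invariant propagated along the recurrence. -/
def Good (a : ℕ) (K : MvPolynomial (Fin 4) ℤ) : Prop :=
  (∀ i, Pos (w a (Th^[i] K))) ∧ (∀ i, Pos (Q a * Th^[i] K))

lemma w_add (a : ℕ) (p q : MvPolynomial (Fin 4) ℤ) : w a (p + q) = w a p + w a q := by
  simp only [w, Th_add]; ring

lemma Good.add {a K L} (hK : Good a K) (hL : Good a L) : Good a (K + L) := by
  refine ⟨fun i => ?_, fun i => ?_⟩
  · rw [Th_iter_add, w_add]; exact (hK.1 i).add (hL.1 i)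
  · rw [Th_iter_add, mul_add]; exact (hK.2 i).add (hL.2 i)

lemma Good.th {a K} (hK : Good a K) : Good a (Th K) := by
  refine ⟨fun i => ?_, fun i => ?_⟩
  · rw [← Function.iterate_succ_apply]; exact hK.1 (i+1)
  · rw [← Function.iterate_succ_apply]; exact hK.2 (i+1)

lemma Th_C_mul (c : ℤ) (K : MvPolynomial (Fin 4) ℤ) : Th (C c * K) = C c * Th K := by
  rw [Th, Th]
  rw [pderiv_mul, pderiv_C]
  ring

lemma Th_iter_C_mul (i : ℕ) (c : ℤ) (K : MvPolynomial (Fin 4) ℤ) :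
    Th^[i] (C c * K) = C c * Th^[i] K := by
  induction i generalizing K with
  | zero => simp
  | succ i ih => rw [Function.iterate_succ_apply, Th_C_mul, ih,
      Function.iterate_succ_apply]

lemma Good.C_mul {a K} (hK : Good a K) {c : ℤ} (hc : 0 ≤ c) : Good a (C c * K) := by
  refine ⟨fun i => ?_, fun i => ?_⟩
  · rw [Th_iter_C_mul]
    have : w a (C c * Th^[i] K) = C c * w a (Th^[i] K) := by
      simp only [w, Th_C_mul]; ring
    rw [this]; exact (Pos_C hc).mul (hK.1 i)
  · rw [Th_iter_C_mul]
    have : Q a * (C c * Th^[i] K) = C c * (Q a * Th^[i] K) := by ring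
    rw [this]; exact (Pos_C hc).mul (hK.2 i)

lemma Th_X_mul_of_ne (j : Fin 4) (hj : j ≠ 1) (K : MvPolynomial (Fin 4) ℤ) :
    Th (X j * K) = X j * Th K := by
  rw [Th, Th, pderiv_mul, pderiv_X_of_ne hj]
  ring

lemma Th_iter_X_mul_of_ne (i : ℕ) (j : Fin 4) (hj : j ≠ 1) (K : MvPolynomial (Fin 4) ℤ) :
    Th^[i] (X j * K) = X j * Th^[i] K := by
  induction i generalizing K with
  | zero => simp
  | succ i ih => rw [Function.iterate_succ_apply, Th_X_mul_of_ne j hj, ih,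
      Function.iterate_succ_apply]

lemma Good.X_mul_of_ne {a K} (hK : Good a K) (j : Fin 4) (hj : j ≠ 1) :
    Good a (X j * K) := by
  refine ⟨fun i => ?_, fun i => ?_⟩
  · rw [Th_iter_X_mul_of_ne i j hj]
    have : w a (X j * Th^[i] K) = X j * w a (Th^[i] K) := by
      simp only [w, Th_X_mul_of_ne j hj]; ring
    rw [this]; exact (Pos_X j).mul (hK.1 i)
  · rw [Th_iter_X_mul_of_ne i j hj]
    have : Q a * (X j * Th^[i] K) = X j * (Q a * Th^[i] K) := by ring
    rw [this]; exact (Pos_X j).mul (hK.2 i)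

lemma Th_X1_mul (K : MvPolynomial (Fin 4) ℤ) : Th (X 1 * K) = X 1 * (K + Th K) := by
  rw [Th, Th, pderiv_mul, pderiv_X_self]
  ring

lemma Good.X1_mul {a : ℕ} : ∀ (i : ℕ) (K : MvPolynomial (Fin 4) ℤ), Good a K →
    Pos (w a (Th^[i] (X 1 * K))) ∧ Pos (Q a * Th^[i] (X 1 * K)) := by
  intro i
  induction i with
  | zero =>
      intro K hK
      constructor
      · simp only [Function.iterate_zero, id_eq]
        have : w a (X 1 * K) = X 1 * (Q a * K) + X 1 * w a K := by
          simp only [w, Th_X1_mul]; ring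
        rw [this]
        have h0 := hK.1 0
        have h0' := hK.2 0
        simp only [Function.iterate_zero, id_eq] at h0 h0'
        exact ((Pos_X 1).mul h0').add ((Pos_X 1).mul h0)
      · simp only [Function.iterate_zero, id_eq]
        have : Q a * (X 1 * K) = X 1 * (Q a * K) := by ring
        rw [this]
        have h0' := hK.2 0
        simp only [Function.iterate_zero, id_eq] at h0'
        exact (Pos_X 1).mul h0'
  | succ i ih =>
      intro K hK
      have hstep : Th^[i+1] (X 1 * K) = Th^[i] (X 1 * (K + Th K)) := by
        rw [Function.iterate_succ_apply, Th_X1_mul]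
      rw [hstep]
      exact ih (K + Th K) (hK.add hK.th)

lemma Good.X1_mul' {a K} (hK : Good a K) : Good a (X 1 * K) :=
  ⟨fun i => (Good.X1_mul i K hK).1, fun i => (Good.X1_mul i K hK).2⟩

/-- Decomposition of the recurrence into `Good`-preserving operations. -/
lemma Q_succ_decomp (c : ℕ) :
    Q (c+2) = X 0 * Q (c+1) + C ((c:ℤ)+1) * (X 2 * Q (c+1)) +
      (X 1 * (C ((c:ℤ)+1) * Q (c+1) + Th (Q (c+1))) +
       X 3 * (C ((c:ℤ)+1) * Q (c+1) + Th (Q (c+1)))) := by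
  rw [Q]
  simp only [Th]
  ring

lemma Good_Q {a : ℕ} (ha : 1 ≤ a) : ∀ b, a ≤ b → Good a (Q b) := by
  intro b hb
  induction b, hb using Nat.le_induction with
  | base =>
      exact ⟨fun i => sym a i, fun i => (Pos_Q a).mul ((Pos_Q a).th_iter i)⟩
  | succ b hb ih =>
      have hgb : Good a (Q b) := ih
      obtain ⟨c, rfl⟩ : ∃ c, b = c + 1 := ⟨b - 1, by omega⟩
      rw [Q_succ_decomp c]
      have hK : Good a (C ((c:ℤ)+1) * Q (c+1) + Th (Q (c+1))) :=
        (hgb.C_mul (by positivity)).add hgb.th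
      exact ((hgb.X_mul_of_ne 0 (by decide)).add
          ((hgb.X_mul_of_ne 2 (by decide)).C_mul (by positivity))).add
        ((hK.X1_mul').add (hK.X_mul_of_ne 3 (by decide)))

/-- The main algebraic identity. -/
lemma main_eq (a b : ℕ) (hab : a ≤ b) :
    Q (a+1) * Q (b+3) - Q (a+2) * Q (b+2)
      = C ((b:ℤ) - a + 1) * ((X 2 + X 1 + X 3) * (Q (a+1) * Q (b+2)))
        + (X 1 + X 3) * (Q (a+1) * Th (Q (b+2)) - Th (Q (a+1)) * Q (b+2)) := by
  have h3 : Q (b+3) =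
      (X 0 + C (((b+1 : ℕ):ℤ) + 1) * X 2) * Q (b+2) +
        (X 1 + X 3) * (C (((b+1 : ℕ):ℤ) + 1) * Q (b+2) + X 1 * pderiv 1 (Q (b+2))) := by
    rw [show b + 3 = (b+1) + 2 by ring]
    rw [Q]
  have h2 : Q (a+2) =
      (X 0 + C ((a:ℤ) + 1) * X 2) * Q (a+1) +
        (X 1 + X 3) * (C ((a:ℤ) + 1) * Q (a+1) + X 1 * pderiv 1 (Q (a+1))) := by
    rw [Q]
  have hcast : (((b+1 : ℕ):ℤ) + 1) = ((b:ℤ) - a + 1) + ((a:ℤ) + 1) := by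
    push_cast; ring
  rw [h3, h2, hcast, C_add]
  simp only [Th]
  ring


/-- The generalized Ramanujan polynomials are strongly `{x,y,z,t}`-log-convex: for
`2 ≤ m ≤ n`, the polynomial `Q_{m-1}·Q_{n+1} − Q_m·Q_n` has nonnegative (integer)
coefficients. -/
theorem Q_strongly_log_convex (m n : ℕ) (hm : 2 ≤ m) (hmn : m ≤ n) (mon : Fin 4 →₀ ℕ) :
    0 ≤ (Q (m - 1) * Q (n + 1) - Q m * Q n).coeff mon := by
  obtain ⟨a, rfl⟩ : ∃ a, m = a + 2 := ⟨m - 2, by omega⟩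
  obtain ⟨b, rfl⟩ : ∃ b, n = b + 2 := ⟨n - 2, by omega⟩
  have hab : a ≤ b := by omega
  have hm1 : a + 2 - 1 = a + 1 := by omega
  rw [hm1, show b + 2 + 1 = b + 3 by ring, main_eq a b hab]
  have habZ : (0:ℤ) ≤ (b:ℤ) - a + 1 := by
    have : (a:ℤ) ≤ (b:ℤ) := by exact_mod_cast hab
    linarith
  have hgood : Good (a+1) (Q (b+2)) := Good_Q (by omega) (b+2) (by omega)
  have hw : Pos (Q (a+1) * Th (Q (b+2)) - Th (Q (a+1)) * Q (b+2)) := by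
    have h := hgood.1 0
    simp only [w, Function.iterate_zero, id_eq] at h
    exact h
  have : Pos (C ((b:ℤ) - a + 1) * ((X 2 + X 1 + X 3) * (Q (a+1) * Q (b+2)))
      + (X 1 + X 3) * (Q (a+1) * Th (Q (b+2)) - Th (Q (a+1)) * Q (b+2))) :=
    ((Pos_C habZ).mul ((((Pos_X 2).add (Pos_X 1)).add (Pos_X 3)).mul
      ((Pos_Q (a+1)).mul (Pos_Q (b+2))))).add (((Pos_X 1).add (Pos_X 3)).mul hw)
  exact this mon
end

section
/- If A(x) = ∑_{i=0}^d a_i x^i is a polynomial whose coefficient sequence (a_0,...,a_d) is nonnegative, log-concave (a_i^2 ≥ a_{i-1}a_{i+1} for 0 < i < d), and has no internal zeros, then the coefficients of A(x+1) are also nonnegative, log-concave, and have no internal zeros. -/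
open Polynomial Finset

namespace ShiftLCAux

/-- Coefficient formula for `A.comp (X+1)`. -/
lemma coeff_comp_formula (A : ℝ[X]) {N : ℕ} (hN : A.natDegree < N) (n : ℕ) :
    (A.comp (X + 1)).coeff n = ∑ m ∈ range N, A.coeff m * ((m.choose n : ℕ) : ℝ) := by
  have h : A.comp (X + 1) = ∑ m ∈ range N, C (A.coeff m) * (X + 1) ^ m := by
    rw [comp, eval₂_eq_sum_range' C hN (X + 1)]
  rw [h, finset_sum_coeff]
  refine Finset.sum_congr rfl fun m _ => ?_
  rw [coeff_C_mul, coeff_X_add_one_pow]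

lemma nonneg_comp (A : ℝ[X]) (h0 : ∀ i, 0 ≤ A.coeff i) (n : ℕ) :
    0 ≤ (A.comp (X + 1)).coeff n := by
  rw [coeff_comp_formula A (Nat.lt_succ_self _) n]
  exact Finset.sum_nonneg fun m _ => mul_nonneg (h0 m) (by positivity)

/-- downward-closed positivity of coefficients of `A.comp (X+1)` -/
lemma support_down (A : ℝ[X]) (h0 : ∀ i, 0 ≤ A.coeff i) {k j : ℕ}
    (hk : (A.comp (X + 1)).coeff k ≠ 0) (hj : j ≤ k) :
    0 < (A.comp (X + 1)).coeff j := by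
  rw [coeff_comp_formula A (Nat.lt_succ_self _)] at hk ⊢
  obtain ⟨m, hm, hne⟩ := Finset.exists_ne_zero_of_sum_ne_zero hk
  have hm1 : 0 < A.coeff m := lt_of_le_of_ne (h0 m) fun h => hne (by rw [← h]; ring)
  have hkm : k ≤ m := by
    by_contra h
    push_neg at h
    rw [Nat.choose_eq_zero_of_lt h] at hne
    simp at hne
  have hpos : 0 < A.coeff m * ((m.choose j : ℕ) : ℝ) := by
    have := Nat.choose_pos (hj.trans hkm)
    positivity
  calc (0:ℝ) < A.coeff m * ((m.choose j : ℕ) : ℝ) := hpos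
    _ ≤ ∑ m ∈ range (A.natDegree + 1), A.coeff m * ((m.choose j : ℕ) : ℝ) :=
        Finset.single_le_sum (f := fun t => A.coeff t * ((t.choose j : ℕ) : ℝ))
          (fun t _ => mul_nonneg (h0 t) (by positivity)) hm

section GenLC

variable (A : ℝ[X]) (h0 : ∀ i, 0 ≤ A.coeff i)
  (hlc : ∀ i, 1 ≤ i → A.coeff (i - 1) * A.coeff (i + 1) ≤ (A.coeff i) ^ 2)
  (hiz : ∀ i j k, i < j → j < k → A.coeff i ≠ 0 → A.coeff k ≠ 0 → A.coeff j ≠ 0)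

include h0 hlc hiz

lemma step' : ∀ n p : ℕ, A.coeff p * A.coeff (p + 2 + n) ≤ A.coeff (p + 1) * A.coeff (p + 1 + n) := by
  intro n
  induction n with
  | zero =>
    intro p
    have h := hlc (p + 1) (by omega)
    have e1 : p + 1 - 1 = p := by omega
    rw [e1] at h
    calc A.coeff p * A.coeff (p + 2 + 0) = A.coeff p * A.coeff (p + 1 + 1) := by ring_nf
      _ ≤ A.coeff (p + 1) ^ 2 := h
      _ = A.coeff (p + 1) * A.coeff (p + 1 + 0) := by ring
  | succ n ih =>
    intro p
    by_cases hp : A.coeff p = 0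
    · rw [hp, zero_mul]; exact mul_nonneg (h0 _) (h0 _)
    by_cases hq : A.coeff (p + 2 + (n + 1)) = 0
    · rw [hq, mul_zero]; exact mul_nonneg (h0 _) (h0 _)
    have hmid : 0 < A.coeff (p + 2 + n) := by
      have := hiz p (p + 2 + n) (p + 2 + (n + 1)) (by omega) (by omega) hp hq
      exact lt_of_le_of_ne (h0 _) (Ne.symm this)
    have hmid2 : 0 < A.coeff (p + 1 + n) := by
      have := hiz p (p + 1 + n) (p + 2 + (n + 1)) (by omega) (by omega) hp hq
      exact lt_of_le_of_ne (h0 _) (Ne.symm this)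
    have h1 := ih p
    have h2 := hlc (p + 2 + n) (by omega)
    have e1 : p + 2 + n - 1 = p + 1 + n := by omega
    have e2 : p + 2 + n + 1 = p + 2 + (n + 1) := by omega
    rw [e1, e2] at h2
    have e3 : p + 1 + (n + 1) = p + 2 + n := by omega
    rw [e3]
    nlinarith [mul_le_mul_of_nonneg_right h1 (h0 (p + 2 + n)),
      mul_le_mul_of_nonneg_left h2 (h0 p), hmid2, h0 p, h0 (p + 1)]

lemma genLC' : ∀ r n p : ℕ,
    A.coeff p * A.coeff (p + (2 * r + n)) ≤ A.coeff (p + r) * A.coeff (p + r + n) := by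
  intro r
  induction r with
  | zero => intro n p; simp
  | succ r ih =>
    intro n p
    have hstep := step' A h0 hlc hiz (2 * r + n) p
    have hih := ih n (p + 1)
    have e1 : p + 2 + (2 * r + n) = p + (2 * (r + 1) + n) := by omega
    rw [e1] at hstep
    have e3 : p + 1 + (2 * r + n) = p + 1 + (2 * r + n) := by omega
    have e4 : p + 1 + r = p + (r + 1) := by omega
    rw [e4] at hih
    exact le_trans hstep hih

lemma genLC (α β : ℕ) (hα : 1 ≤ α) (hβ : 1 ≤ β) :
    A.coeff 0 * A.coeff (α + β) ≤ A.coeff α * A.coeff β := by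
  rcases le_total α β with h | h
  · have := genLC' A h0 hlc hiz α (β - α) 0
    have e1 : 0 + (2 * α + (β - α)) = α + β := by omega
    have e2 : (0 : ℕ) + α = α := by omega
    have e3 : 0 + α + (β - α) = β := by omega
    rwa [e1, e3, e2] at this
  · have := genLC' A h0 hlc hiz β (α - β) 0
    have e1 : 0 + (2 * β + (α - β)) = α + β := by omega
    have e2 : (0 : ℕ) + β = β := by omega
    have e3 : 0 + β + (α - β) = α := by omega
    rw [e1, e3, e2] at this
    linarith [this, mul_comm (A.coeff α) (A.coeff β)]

end GenLC

/-- Reindexing a triangular double sum as a filtered sum over a product. -/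
lemma sum_reindex (N : ℕ) (f : ℕ → ℕ → ℝ) :
    ∑ m ∈ range N, ∑ t ∈ range m, f t (m - 1 - t) =
      ∑ p ∈ (range N ×ˢ range N).filter (fun p => p.1 + p.2 + 1 < N), f p.1 p.2 := by
  rw [Finset.sum_sigma']
  refine Finset.sum_nbij' (i := fun p => (p.2, p.1 - 1 - p.2))
    (j := fun p => ⟨p.1 + p.2 + 1, p.1⟩) ?_ ?_ ?_ ?_ ?_
  · rintro ⟨m, t⟩ hmt
    simp only [Finset.mem_sigma, Finset.mem_range] at hmt
    simp only [Finset.mem_filter, Finset.mem_product, Finset.mem_range]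
    omega
  · rintro ⟨s, u⟩ hsu
    simp only [Finset.mem_filter, Finset.mem_product, Finset.mem_range] at hsu
    simp only [Finset.mem_sigma, Finset.mem_range]
    omega
  · rintro ⟨m, t⟩ hmt
    simp only [Finset.mem_sigma, Finset.mem_range] at hmt
    have h : t + (m - 1 - t) + 1 = m := by omega
    simp [h]
  · rintro ⟨s, u⟩ hsu
    simp only [Finset.mem_filter, Finset.mem_product, Finset.mem_range] at hsu
    have h : s + u + 1 - 1 - s = u := by omega
    simp [h]
  · rintro ⟨m, t⟩ _
    rfl

lemma hch (k : ℕ) : (∑ u ∈ range k, (u : ℝ)) = ((k.choose 2 : ℕ) : ℝ) := by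
  have h1 : (∑ u ∈ range k, u) = k.choose 2 := by
    have h2 := Finset.sum_range_id_mul_two k
    have h3 := Nat.choose_two_right k
    omega
  rw [← h1]
  push_cast
  rfl

lemma mainLC : ∀ (d : ℕ) (A : ℝ[X]), A.natDegree ≤ d →
    (∀ i, 0 ≤ A.coeff i) →
    (∀ i, 1 ≤ i → A.coeff (i - 1) * A.coeff (i + 1) ≤ (A.coeff i) ^ 2) →
    (∀ i j k, i < j → j < k → A.coeff i ≠ 0 → A.coeff k ≠ 0 → A.coeff j ≠ 0) →
    ∀ i, 1 ≤ i → (A.comp (X + 1)).coeff (i - 1) * (A.comp (X + 1)).coeff (i + 1) ≤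
      ((A.comp (X + 1)).coeff i) ^ 2 := by
  intro d
  induction d with
  | zero =>
    intro A hdeg h0 hlc hiz i hi
    have hz : (A.comp (X + 1)).coeff (i + 1) = 0 := by
      apply coeff_eq_zero_of_natDegree_lt
      have h := natDegree_comp_le (p := A) (q := X + 1)
      have hA0 : A.natDegree = 0 := by omega
      rw [hA0, zero_mul] at h
      omega
    rw [hz, mul_zero]
    positivity
  | succ d ih =>
    intro A hdeg h0 hlc hiz i hi
    set B := A.divX with hB
    have hBA : ∀ n, B.coeff n = A.coeff (n + 1) := fun n => coeff_divX
    have hBdeg : B.natDegree ≤ d := by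
      rw [hB, natDegree_divX_eq_natDegree_tsub_one]
      omega
    have hB0 : ∀ m, 0 ≤ B.coeff m := fun m => by rw [hBA]; exact h0 _
    have hBlc : ∀ m, 1 ≤ m → B.coeff (m - 1) * B.coeff (m + 1) ≤ (B.coeff m) ^ 2 := by
      intro m hm
      obtain ⟨m', rfl⟩ : ∃ m', m = m' + 1 := ⟨m - 1, by omega⟩
      have h := hlc (m' + 2) (by omega)
      have e : m' + 2 - 1 = m' + 1 := by omega
      rw [e] at h
      have e2 : m' + 1 - 1 = m' := by omega
      rw [e2, hBA, hBA, hBA]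
      have e4 : m' + 1 + 1 + 1 = m' + 2 + 1 := by omega
      have e3 : m' + 1 + 1 = m' + 2 := by omega
      rw [e4, e3]
      exact h
    have hBiz : ∀ i j k, i < j → j < k → B.coeff i ≠ 0 → B.coeff k ≠ 0 → B.coeff j ≠ 0 := by
      intro i j k hij hjk hi hk
      rw [hBA] at hi hk ⊢
      exact hiz (i + 1) (j + 1) (k + 1) (by omega) (by omega) hi hk
    have hPlc := ih B hBdeg hB0 hBlc hBiz
    have hPnn : ∀ n, 0 ≤ (B.comp (X + 1)).coeff n := nonneg_comp B hB0
    have hPds : ∀ {k j : ℕ}, (B.comp (X + 1)).coeff k ≠ 0 → j ≤ k →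
        0 < (B.comp (X + 1)).coeff j := fun hk hj => support_down B hB0 hk hj
    set P := B.comp (X + 1) with hPdef
    have hcomp : A.comp (X + 1) = (X + 1) * P + C (A.coeff 0) := by
      conv_lhs => rw [← X_mul_divX_add A]
      rw [add_comp, mul_comp, X_comp, C_comp]
    have hc0 : (A.comp (X + 1)).coeff 0 = P.coeff 0 + A.coeff 0 := by
      rw [hcomp]
      simp [coeff_add, coeff_C, add_mul, mul_coeff_zero]
    have hcs : ∀ n, (A.comp (X + 1)).coeff (n + 1) = P.coeff n + P.coeff (n + 1) := by
      intro n
      rw [hcomp]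
      simp [coeff_add, coeff_C, add_mul, coeff_X_mul]
    obtain ⟨j, rfl⟩ : ∃ j, i = j + 1 := ⟨i - 1, by omega⟩
    rcases Nat.eq_zero_or_pos j with rfl | hj
    · -- the case i = 1
      have G0 : P.coeff 0 * P.coeff 2 ≤ P.coeff 1 ^ 2 := by
        have h := hPlc 1 le_rfl
        norm_num at h
        exact h
      set N := B.natDegree + 1 with hN
      have hb0 : P.coeff 0 = ∑ m ∈ range N, B.coeff m := by
        rw [hPdef, coeff_comp_formula B (Nat.lt_succ_self _)]
        simp [hN]
      have hb1 : P.coeff 1 = ∑ m ∈ range N, B.coeff m * (m : ℝ) := by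
        rw [hPdef, coeff_comp_formula B (Nat.lt_succ_self _)]
        simp [Nat.choose_one_right, hN]
      have hb2 : P.coeff 2 = ∑ m ∈ range N, B.coeff m * ((m.choose 2 : ℕ) : ℝ) := by
        rw [hPdef]
        exact coeff_comp_formula B (Nat.lt_succ_self _) 2
      have G1 : A.coeff 0 * P.coeff 1 ≤ P.coeff 0 ^ 2 := by
        rw [hb0, hb1, Finset.mul_sum, sq, Finset.sum_mul_sum]
        calc ∑ m ∈ range N, A.coeff 0 * (B.coeff m * (m : ℝ))
            = ∑ m ∈ range N, ∑ t ∈ range m, A.coeff 0 * B.coeff m := by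
              refine Finset.sum_congr rfl fun m _ => ?_
              rw [Finset.sum_const, Finset.card_range, nsmul_eq_mul]
              ring
          _ ≤ ∑ m ∈ range N, ∑ t ∈ range m, B.coeff t * B.coeff (m - 1 - t) := by
              refine Finset.sum_le_sum fun m _ => Finset.sum_le_sum fun t ht => ?_
              rw [Finset.mem_range] at ht
              have hg := genLC A h0 hlc hiz (t + 1) (m - t) (by omega) (by omega)
              have e1 : t + 1 + (m - t) = m + 1 := by omega
              rw [e1] at hg
              simp only [hBA]
              have e2 : m - 1 - t + 1 = m - t := by omega
              rw [e2]
              exact hg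
          _ = ∑ p ∈ (range N ×ˢ range N).filter (fun p => p.1 + p.2 + 1 < N),
                B.coeff p.1 * B.coeff p.2 :=
              sum_reindex N (fun a b => B.coeff a * B.coeff b)
          _ ≤ ∑ p ∈ range N ×ˢ range N, B.coeff p.1 * B.coeff p.2 := by
              refine Finset.sum_le_sum_of_subset_of_nonneg (Finset.filter_subset _ _) ?_
              intro p _ _
              exact mul_nonneg (hB0 _) (hB0 _)
          _ = ∑ s ∈ range N, ∑ u ∈ range N, B.coeff s * B.coeff u := by
              rw [Finset.sum_product]
      have G2 : A.coeff 0 * P.coeff 2 ≤ P.coeff 0 * P.coeff 1 := by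
        rw [hb0, hb1, hb2, Finset.mul_sum, Finset.sum_mul_sum]
        calc ∑ k ∈ range N, A.coeff 0 * (B.coeff k * ((k.choose 2 : ℕ) : ℝ))
            = ∑ k ∈ range N, ∑ u ∈ range k, A.coeff 0 * B.coeff k * (u : ℝ) := by
              refine Finset.sum_congr rfl fun k _ => ?_
              rw [← Finset.mul_sum, hch k]
              ring
          _ ≤ ∑ k ∈ range N, ∑ u ∈ range k, B.coeff (k - 1 - u) * B.coeff u * (u : ℝ) := by
              refine Finset.sum_le_sum fun k _ => Finset.sum_le_sum fun u hu => ?_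
              rw [Finset.mem_range] at hu
              have hg := genLC A h0 hlc hiz (k - u) (u + 1) (by omega) (by omega)
              have e1 : k - u + (u + 1) = k + 1 := by omega
              rw [e1] at hg
              simp only [hBA]
              have e2 : k - 1 - u + 1 = k - u := by omega
              rw [e2]
              exact mul_le_mul_of_nonneg_right hg (by positivity)
          _ = ∑ p ∈ (range N ×ˢ range N).filter (fun p => p.1 + p.2 + 1 < N),
                B.coeff p.2 * B.coeff p.1 * (p.1 : ℝ) :=
              sum_reindex N (fun a b => B.coeff b * B.coeff a * (a : ℝ))
          _ ≤ ∑ p ∈ range N ×ˢ range N, B.coeff p.2 * B.coeff p.1 * (p.1 : ℝ) := by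
              refine Finset.sum_le_sum_of_subset_of_nonneg (Finset.filter_subset _ _) ?_
              intro p _ _
              have := hB0 p.1
              have := hB0 p.2
              positivity
          _ = ∑ s ∈ range N, ∑ u ∈ range N, B.coeff s * (B.coeff u * (u : ℝ)) := by
              rw [Finset.sum_product, Finset.sum_comm]
              exact Finset.sum_congr rfl fun i _ => Finset.sum_congr rfl fun j _ => by ring
      -- assemble the i = 1 case
      have hC1 : (A.comp (X + 1)).coeff 1 = P.coeff 0 + P.coeff 1 := by
        have := hcs 0
        norm_num at this
        exact this
      have hC2 : (A.comp (X + 1)).coeff 2 = P.coeff 1 + P.coeff 2 := by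
        have := hcs 1
        norm_num at this
        exact this
      norm_num
      rw [hc0, hC1, hC2]
      nlinarith [G0, G1, G2, hPnn 0, hPnn 1, hPnn 2, h0 0,
        mul_nonneg (hPnn 0) (hPnn 1)]
    · -- the case i ≥ 2
      obtain ⟨k, rfl⟩ : ∃ k, j = k + 1 := ⟨j - 1, by omega⟩
      have h1 : P.coeff k * P.coeff (k + 2) ≤ P.coeff (k + 1) ^ 2 := by
        have h := hPlc (k + 1) (by omega)
        rwa [show k + 1 - 1 = k by omega, show k + 1 + 1 = k + 2 by omega] at h
      have h2 : P.coeff (k + 1) * P.coeff (k + 3) ≤ P.coeff (k + 2) ^ 2 := by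
        have h := hPlc (k + 2) (by omega)
        rwa [show k + 2 - 1 = k + 1 by omega, show k + 2 + 1 = k + 3 by omega] at h
      have h3 : P.coeff k * P.coeff (k + 3) ≤ P.coeff (k + 1) * P.coeff (k + 2) := by
        by_cases hz : P.coeff (k + 3) = 0
        · rw [hz, mul_zero]
          exact mul_nonneg (hPnn _) (hPnn _)
        · have p0 := hPds hz (show k ≤ k + 3 by omega)
          have p1 := hPds hz (show k + 1 ≤ k + 3 by omega)
          have p2 := hPds hz (show k + 2 ≤ k + 3 by omega)
          have p3 : 0 ≤ P.coeff (k + 3) := hPnn _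
          nlinarith [h1, h2, p0, p1, p2, p3]
      have hA1 : (A.comp (X + 1)).coeff (k + 1) = P.coeff k + P.coeff (k + 1) := hcs k
      have hA2 : (A.comp (X + 1)).coeff (k + 2) = P.coeff (k + 1) + P.coeff (k + 2) := by
        have := hcs (k + 1)
        rwa [show k + 1 + 1 = k + 2 by omega] at this
      have hA3 : (A.comp (X + 1)).coeff (k + 3) = P.coeff (k + 2) + P.coeff (k + 3) := by
        have := hcs (k + 2)
        rwa [show k + 2 + 1 = k + 3 by omega] at this
      have e1 : k + 1 + 1 - 1 = k + 1 := by omega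
      have e2 : k + 1 + 1 + 1 = k + 3 := by omega
      have e3 : k + 1 + 1 = k + 2 := by omega
      rw [e1, e2, e3, hA1, hA2, hA3]
      nlinarith [h1, h2, h3, hPnn k, hPnn (k + 1), hPnn (k + 2), hPnn (k + 3),
        mul_nonneg (hPnn k) (hPnn (k + 1)), mul_nonneg (hPnn (k + 2)) (hPnn (k + 3))]

end ShiftLCAux

/-- If a polynomial `A` has nonnegative, log-concave coefficients with no internal zeros,
then so does `A(x+1)`. -/
theorem shift_preserves_log_concave (A : Polynomial ℝ)
    (h0 : ∀ i, 0 ≤ A.coeff i)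
    (hlc : ∀ i, 1 ≤ i → A.coeff (i - 1) * A.coeff (i + 1) ≤ (A.coeff i) ^ 2)
    (hiz : ∀ i j k, i < j → j < k → A.coeff i ≠ 0 → A.coeff k ≠ 0 → A.coeff j ≠ 0) :
    (∀ i, 0 ≤ (A.comp (X + 1)).coeff i) ∧
    (∀ i, 1 ≤ i →
      (A.comp (X + 1)).coeff (i - 1) * (A.comp (X + 1)).coeff (i + 1) ≤
        ((A.comp (X + 1)).coeff i) ^ 2) ∧
    (∀ i j k, i < j → j < k → (A.comp (X + 1)).coeff i ≠ 0 →
      (A.comp (X + 1)).coeff k ≠ 0 → (A.comp (X + 1)).coeff j ≠ 0) := by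
  refine ⟨ShiftLCAux.nonneg_comp A h0, ShiftLCAux.mainLC A.natDegree A le_rfl h0 hlc hiz, ?_⟩
  intro i j k hij hjk hi hk
  exact (ShiftLCAux.support_down A h0 hk hjk.le).ne'
end
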